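/- arXiv:2008.00875 — 6 statements merged into one kernel-verified Lean document; each statement's English description precedes it below -/
import Mathlib

section
/- Let α and β be coprime integers with α odd and positive and β even. Then there exist an integer l ≥ 0 and integers m₀, m₁, …, m_{2l} with m_i ≠ 0 for all 1 ≤ i ≤ 2l, such that the finite continued fraction [2m₀; 2m₁, …, 2m_{2l}] is well defined (every tail [2m_i; 2m_{i+1}, …, 2m_{2l}] with i ≥ 1 is nonzero) and its value equals the rational number β/α. -/
/-- The value of the finite continued fraction `[c₀; c₁, …, c_k]`, defined
recursively by `v_k = c_k` and `v_i = c_i + 1/v_{i+1}`. -/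
def cfVal : List ℤ → ℚ
  | [] => 0
  | [c] => (c : ℚ)
  | c :: cs => (c : ℚ) + (cfVal cs)⁻¹

/-- The continued fraction given by a list of partial quotients is well defined
if every tail value with index `i ≥ 1` is nonzero. -/
def CFWellDef (L : List ℤ) : Prop :=
  ∀ i : ℕ, 1 ≤ i → i < L.length → cfVal (L.drop i) ≠ 0

lemma cfVal_cons (c : ℤ) (cs : List ℤ) (h : cs ≠ []) :
    cfVal (c :: cs) = (c : ℚ) + (cfVal cs)⁻¹ := by
  cases cs with
  | nil => simp at h
  | cons d ds => rfl

lemma exists_rem (a b : ℤ) (ha : 0 < a) (hpar : Odd (a + b)) :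
    ∃ m r : ℤ, b = 2*a*m + r ∧ |r| < a := by
  set r₀ := b % (2*a) with hr₀
  have h2a : (0:ℤ) < 2*a := by linarith
  have h0 : 0 ≤ r₀ := Int.emod_nonneg _ (by omega)
  have h1 : r₀ < 2*a := Int.emod_lt_of_pos _ h2a
  have hbr : b = 2*a*(b/(2*a)) + r₀ := by
    rw [hr₀]; exact (Int.mul_ediv_add_emod b (2*a)).symm
  have hne : r₀ ≠ a := by
    intro h
    have he : Even (b - r₀) := ⟨a * (b/(2*a)), by linarith [hbr]⟩
    rw [h] at he
    rcases hpar with ⟨k, hk⟩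
    rcases he with ⟨j, hj⟩
    omega
  rcases lt_or_gt_of_ne hne with hlt | hgt
  · exact ⟨b/(2*a), r₀, hbr, by rw [abs_of_nonneg h0]; exact hlt⟩
  · refine ⟨b/(2*a) + 1, r₀ - 2*a, by linarith [hbr], ?_⟩
    rw [abs_of_nonpos (by linarith)]; omega

lemma aux : ∀ n : ℕ, ∀ a b : ℤ, a.natAbs ≤ n → Odd a → 0 < a → Even b → IsCoprime a b →
    ∃ L : List ℤ, Odd L.length ∧ (∀ c ∈ L, Even c) ∧ (∀ c ∈ L.tail, c ≠ 0) ∧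
      (a < |b| → ∀ c ∈ L, c ≠ 0) ∧ CFWellDef L ∧ cfVal L = (b : ℚ) / a := by
  intro n
  induction n with
  | zero => intro a b hn _ hapos _ _; omega
  | succ n ih =>
    intro a b hn haodd hapos hbeven hcop
    obtain ⟨m₀, d, hbd, hd⟩ := exists_rem a b hapos (haodd.add_even hbeven)
    have hdeven : Even d := by
      have : d = b - 2*a*m₀ := by linarith
      rw [this]; exact hbeven.sub (⟨a*m₀, by ring⟩)
    by_cases hd0 : d = 0
    · -- a is a unit, a = 1
      have ha1 : a = 1 := by
        have hdvd : a ∣ b := ⟨2*m₀, by rw [hbd, hd0]; ring⟩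
        have := (hcop.isUnit_of_dvd' dvd_rfl hdvd)
        rcases Int.isUnit_iff.mp this with h | h <;> omega
      refine ⟨[b], by simp, by simpa using hbeven, by simp, ?_, ?_, ?_⟩
      · intro hab c hc
        simp only [List.mem_singleton] at hc
        subst hc; intro h; rw [h, abs_zero] at hab; omega
      · intro i hi1 hi2; simp at hi2; omega
      · simp [cfVal, ha1]
    · -- recursive case
      have hcop_ad : IsCoprime a d := by
        have : d = b + a * (-(2*m₀)) := by linarith
        rw [this]; exact hcop.add_mul_left_right _
      have hdabs : 0 < |d| := abs_pos.mpr hd0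
      obtain ⟨m', r, har, hr⟩ := exists_rem |d| a
        hdabs (by
          rcases abs_choice d with h | h
          · rw [h]; exact hdeven.add_odd haodd
          · rw [h]; exact (hdeven.neg).add_odd haodd)
      have hrodd : Odd r := by
        have hre : r = a - 2 * |d| * m' := by linarith
        rw [hre]
        exact haodd.sub_even ⟨|d| * m', by ring⟩
      have hr0 : r ≠ 0 := by rintro rfl; exact (Int.not_odd_iff_even.mpr Even.zero) hrodd
      -- m₁ with a = 2*m₁*d + r
      set m₁ : ℤ := if 0 ≤ d then m' else -m' with hm₁
      have ham : a = 2 * m₁ * d + r := by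
        rcases abs_choice d with h | h
        · have hdnn : 0 ≤ d := by rw [← h]; exact abs_nonneg d
          simp only [hm₁, if_pos hdnn]; rw [h] at har; linear_combination har
        · have hdneg : ¬ (0 ≤ d) := by
            intro hh
            have := abs_of_nonneg hh
            omega
          simp only [hm₁, if_neg hdneg]; rw [h] at har; linear_combination har
      have hm₁0 : m₁ ≠ 0 := by
        intro hm0
        rw [hm0] at ham
        have har2 : a = r := by linear_combination ham
        rw [← har2] at hr
        rw [abs_of_pos hapos] at hr
        omega
      have hcop_dr : IsCoprime d r := by
        have : r = a + d * (-(2*m₁)) := by linarith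
        rw [this]; exact hcop_ad.symm.add_mul_left_right _
      -- the pair for the recursive call
      set a' : ℤ := |r| with ha'
      set b' : ℤ := if 0 ≤ r then d else -d with hb'
      have ha'pos : 0 < a' := abs_pos.mpr hr0
      have ha'odd : Odd a' := by
        rcases abs_choice r with h | h <;> rw [ha', h]
        · exact hrodd
        · exact hrodd.neg
      have hb'even : Even b' := by
        rcases le_or_gt 0 r with h | h
        · simp only [hb', if_pos h]; exact hdeven
        · simp only [hb', if_neg (not_le.mpr h)]; exact hdeven.neg
      have hcop' : IsCoprime a' b' := by
        rcases le_or_gt 0 r with h | h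
        · simp only [hb', if_pos h]; rw [ha', abs_of_nonneg h]; exact hcop_dr.symm
        · simp only [hb', if_neg (not_le.mpr h)]; rw [ha', abs_of_neg h]
          exact hcop_dr.symm.neg_left.neg_right
      have hb'abs : |b'| = |d| := by
        rcases le_or_gt 0 r with h | h
        · simp [hb', if_pos h]
        · simp [hb', if_neg (not_le.mpr h), abs_neg]
      have hnat : a'.natAbs ≤ n := by
        have h1 : a' < |d| := by rw [ha']; exact hr
        have h2 : |d| < a := hd
        have h3 : (a.natAbs : ℤ) = a := Int.natAbs_of_nonneg hapos.le
        have h4 : (a'.natAbs : ℤ) = a' := Int.natAbs_of_nonneg ha'pos.le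
        have h5 : (d.natAbs : ℤ) = |d| := by rw [Int.abs_eq_natAbs]
        omega
      obtain ⟨N, hNlen, hNeven, hNtail, hNhead, hNwd, hNval⟩ :=
        ih a' b' hnat ha'odd ha'pos hb'even hcop'
      have hNne : N ≠ [] := by
        rintro rfl; simp at hNlen
      have hdQ : (d : ℚ) ≠ 0 := Int.cast_ne_zero.mpr hd0
      have hrQ : (r : ℚ) ≠ 0 := Int.cast_ne_zero.mpr hr0
      have haQ : (a : ℚ) ≠ 0 := Int.cast_ne_zero.mpr hapos.ne'
      have hNv : cfVal N = (d : ℚ) / r := by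
        rw [hNval]
        rcases le_or_gt 0 r with h | h
        · simp only [hb', if_pos h, ha', abs_of_nonneg h]
        · simp only [hb', if_neg (not_le.mpr h), ha', abs_of_neg h]
          push_cast; rw [neg_div_neg_eq]
      have hNv0 : cfVal N ≠ 0 := by rw [hNv]; exact div_ne_zero hdQ hrQ
      have hNall : ∀ c ∈ N, c ≠ 0 := hNhead (by rw [hb'abs, ha']; exact hr)
      have hv1 : cfVal (2*m₁ :: N) = (a : ℚ) / d := by
        rw [cfVal_cons _ _ hNne, hNv, inv_div]
        have : (a : ℚ) = 2 * m₁ * d + r := by exact_mod_cast congrArg (Int.cast : ℤ → ℚ) ham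
        field_simp
        push_cast
        linarith [this]
      have hv10 : cfVal (2*m₁ :: N) ≠ 0 := by rw [hv1]; exact div_ne_zero haQ hdQ
      have hv0 : cfVal (2*m₀ :: 2*m₁ :: N) = (b : ℚ) / a := by
        rw [cfVal_cons _ _ (by simp), hv1, inv_div]
        have : (b : ℚ) = 2 * a * m₀ + d := by exact_mod_cast congrArg (Int.cast : ℤ → ℚ) hbd
        field_simp
        push_cast
        linarith [this]
      refine ⟨2*m₀ :: 2*m₁ :: N, ?_, ?_, ?_, ?_, ?_, hv0⟩
      · rcases hNlen with ⟨k, hk⟩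
        exact ⟨k + 1, by simp [hk]; ring⟩
      · intro c hc
        simp only [List.mem_cons] at hc
        rcases hc with rfl | rfl | hc
        · exact ⟨m₀, by ring⟩
        · exact ⟨m₁, by ring⟩
        · exact hNeven _ hc
      · intro c hc
        simp only [List.tail_cons, List.mem_cons] at hc
        rcases hc with rfl | hc
        · simpa using hm₁0
        · exact hNall _ hc
      · intro hab c hc
        simp only [List.mem_cons] at hc
        rcases hc with rfl | rfl | hc
        · have hm₀0 : m₀ ≠ 0 := by
            rintro rfl
            have : b = d := by linarith
            rw [this] at hab
            omega
          simpa using hm₀0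
        · simpa using hm₁0
        · exact hNall _ hc
      · intro i hi1 hi2
        match i, hi1 with
        | 1, _ => simpa using hv10
        | 2, _ => simpa using hNv0
        | (k+3), _ =>
          have : ((2*m₀ :: 2*m₁ :: N).drop (k+3)) = N.drop (k+1) := by simp
          rw [this]
          apply hNwd (k+1) (by omega)
          simp at hi2
          omega

theorem continued_fraction_expansion_alpha_odd_beta_even
    (α β : ℤ) (hcop : IsCoprime α β) (hαodd : Odd α) (hαpos : 0 < α) (hβeven : Even β) :
    ∃ (l : ℕ) (m : ℕ → ℤ),
      (∀ i : ℕ, 1 ≤ i → i ≤ 2 * l → m i ≠ 0) ∧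
      CFWellDef ((List.range (2 * l + 1)).map fun i => 2 * m i) ∧
      cfVal ((List.range (2 * l + 1)).map fun i => 2 * m i) = (β : ℚ) / (α : ℚ) := by
  obtain ⟨L, hLlen, hLeven, hLtail, _, hLwd, hLval⟩ :=
    aux α.natAbs α β le_rfl hαodd hαpos hβeven hcop
  obtain ⟨l, hl⟩ := hLlen
  refine ⟨l, fun i => L.getD i 0 / 2, ?_, ?_, ?_⟩
  all_goals {
    have hmap : ((List.range (2 * l + 1)).map fun i => 2 * (L.getD i 0 / 2)) = L := by
      apply List.ext_getElem
      · simp [hl]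
      · intro i h1 h2
        simp only [List.getElem_map, List.getElem_range]
        have hg : L.getD i 0 = L[i] := List.getD_eq_getElem L 0 h2
        rw [hg]
        have he : Even L[i] := hLeven _ (List.getElem_mem h2)
        obtain ⟨t, ht⟩ := he
        omega
    beta_reduce
    first
    | (rw [hmap]; exact hLwd)
    | (rw [hmap]; exact hLval)
    | {
      intro i hi1 hi2
      have hilen : i < L.length := by omega
      have hg : L.getD i 0 = L[i] := List.getD_eq_getElem L 0 hilen
      have hmem : L[i] ∈ L.tail := by
        cases L with
        | nil => simp at hilen
        | cons x xs =>
          obtain ⟨j, rfl⟩ : ∃ j, i = j + 1 := ⟨i - 1, by omega⟩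
          simp only [List.getElem_cons_succ, List.tail_cons]
          exact List.getElem_mem _
      have hne : L[i] ≠ 0 := hLtail _ hmem
      intro h0
      have h0' : L.getD i 0 / 2 = 0 := h0
      obtain ⟨t, ht⟩ := hLeven _ (List.getElem_mem hilen)
      rw [hg] at h0'
      omega
    }
  }
end

section
/- Let α and β be coprime integers with α even and nonzero and β odd. Then there exist an integer l ≥ 0 and integers m₀, m₁, …, m_{2l+1} with m_i ≠ 0 for all 1 ≤ i ≤ 2l+1, such that the finite continued fraction [2m₀; 2m₁, …, 2m_{2l+1}] is well defined (every tail [2m_i; 2m_{i+1}, …, 2m_{2l+1}] with i ≥ 1 is nonzero) and its value equals the rational number β/α. -/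
lemma frac_step (m p q r : ℤ) (hq : q ≠ 0) (hr : r ≠ 0) (h : p = 2*m*q + r) :
    (p : ℚ)/q = 2*m + ((q:ℚ)/r)⁻¹ := by
  have hq' : (q:ℚ) ≠ 0 := Int.cast_ne_zero.mpr hq
  have hr' : (r:ℚ) ≠ 0 := Int.cast_ne_zero.mpr hr
  rw [inv_div]
  field_simp
  push_cast [h]
  ring

lemma choose_r_pos (p q : ℤ) (hq : 2 ≤ q) (hnd : ¬ (q ∣ p)) :
    ∃ m r : ℤ, p = 2*m*q + r ∧ r ≠ 0 ∧ |r| < q := by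
  have hb : 0 < 2*q := by omega
  have h0 : 0 ≤ p % (2*q) := Int.emod_nonneg p (by omega)
  have h1 : p % (2*q) < 2*q := Int.emod_lt_of_pos p hb
  have heq : 2*q * (p / (2*q)) + p % (2*q) = p := Int.mul_ediv_add_emod p (2*q)
  set r0 := p % (2*q) with hr0
  set d := p / (2*q) with hd
  by_cases hcase : r0 < q
  · refine ⟨d, r0, by linear_combination -heq, ?_, ?_⟩
    · intro h
      exact hnd ⟨2*d, by rw [h] at heq; linear_combination -heq⟩
    · rw [abs_of_nonneg h0]; exact hcase
  · have hne : r0 ≠ q := by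
      intro h
      exact hnd ⟨2*d+1, by rw [h] at heq; linear_combination -heq⟩
    refine ⟨d+1, r0 - 2*q, by linear_combination -heq, by omega, ?_⟩
    rw [abs_of_neg (by omega)]; omega

lemma choose_r (p q : ℤ) (hq : 2 ≤ |q|) (hnd : ¬ (q ∣ p)) :
    ∃ m r : ℤ, p = 2*m*q + r ∧ r ≠ 0 ∧ |r| < |q| := by
  rcases le_or_gt 0 q with h | h
  · rw [abs_of_nonneg h] at hq ⊢
    exact choose_r_pos p q hq hnd
  · rw [abs_of_neg h] at hq ⊢
    obtain ⟨m, r, h1, h2, h3⟩ := choose_r_pos p (-q) hq (by rwa [neg_dvd])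
    exact ⟨-m, r, by linear_combination h1, h2, h3⟩

lemma not_dvd_of_coprime (p q : ℤ) (hcop : IsCoprime p q) (hq : 2 ≤ |q|) : ¬ (q ∣ p) := by
  intro hd
  have hu : IsUnit q := hcop.symm.isUnit_of_dvd hd
  rcases Int.isUnit_iff.mp hu with rfl | rfl <;> simp at hq <;> omega

lemma build (n : ℕ) : ∀ p q : ℤ, q.natAbs ≤ n → Odd q → Even p → IsCoprime p q → |q| < |p| →
    ∃ L : List ℤ, L ≠ [] ∧ Odd L.length ∧ (∀ c ∈ L, Even c ∧ c ≠ 0) ∧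
      (∀ i, i < L.length → cfVal (L.drop i) ≠ 0) ∧ cfVal L = (p : ℚ) / q := by
  induction n using Nat.strong_induction_on with
  | _ n IH =>
  intro p q hn hqodd hpeven hcop hlt
  have hq0 : q ≠ 0 := by rintro rfl; simp [Int.not_odd_iff_even.mpr Even.zero] at hqodd
  have hp0 : p ≠ 0 := by
    rintro rfl
    rw [abs_zero] at hlt
    exact (abs_nonneg q).not_gt hlt
  by_cases h1 : |q| = 1
  · -- terminal case
    refine ⟨[p*q], by simp, ⟨0, by simp⟩, ?_, ?_, ?_⟩
    · intro c hc
      simp at hc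
      subst hc
      exact ⟨hpeven.mul_right q, mul_ne_zero hp0 hq0⟩
    · intro i hi
      simp at hi
      obtain rfl : i = 0 := by omega
      show cfVal [p*q] ≠ 0
      show ((p*q : ℤ) : ℚ) ≠ 0
      exact_mod_cast mul_ne_zero hp0 hq0
    · show ((p*q : ℤ) : ℚ) = (p:ℚ)/q
      rcases (abs_eq (by norm_num : (0:ℤ) ≤ 1)).mp h1 with rfl | rfl
      · push_cast; ring
      · push_cast; field_simp
  · have hq2 : 2 ≤ |q| := by have := abs_pos.mpr hq0; omega
    -- Step A
    obtain ⟨m₁, r₁, hA, hr₁0, hr₁lt⟩ := choose_r p q hq2 (not_dvd_of_coprime p q hcop hq2)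
    have hm₁0 : m₁ ≠ 0 := by
      rintro rfl
      simp at hA
      rw [hA] at hlt
      exact (lt_asymm hlt) hr₁lt
    have hr₁even : Even r₁ := by
      obtain ⟨t, ht⟩ : ∃ t, p = 2*t + r₁ := ⟨m₁*q, by linarith⟩
      rw [Int.even_iff] at hpeven ⊢
      omega
    have hcopA : IsCoprime r₁ q := by
      have := hcop.add_mul_left_left (-(2*m₁))
      have he : p + q * (-(2*m₁)) = r₁ := by linarith
      rwa [he] at this
    -- Step B
    have hr₁2 : 2 ≤ |r₁| := by
      rw [Int.even_iff] at hr₁even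
      rcases abs_cases r₁ with ⟨h, h'⟩ | ⟨h, h'⟩ <;> omega
    have hndB : ¬ (r₁ ∣ q) := by
      intro hd
      have hu : IsUnit r₁ := hcopA.isUnit_of_dvd' dvd_rfl hd
      rcases Int.isUnit_iff.mp hu with rfl | rfl <;> simp at hr₁2
    obtain ⟨m₂, r₂, hB, hr₂0, hr₂lt⟩ := choose_r q r₁ hr₁2 hndB
    have hm₂0 : m₂ ≠ 0 := by
      rintro rfl
      simp at hB
      rw [← hB] at hr₂lt
      exact (lt_asymm hr₂lt) hr₁lt
    have hr₂odd : Odd r₂ := by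
      obtain ⟨t, ht⟩ : ∃ t, q = 2*t + r₂ := ⟨m₂*r₁, by linarith⟩
      rw [Int.odd_iff] at hqodd ⊢
      omega
    have hcopB : IsCoprime r₁ r₂ := by
      have := hcopA.add_mul_left_right (-(2*m₂))
      have he : q + r₁ * (-(2*m₂)) = r₂ := by linarith
      rwa [he] at this
    -- recursive call
    have hdec : r₂.natAbs < n := by
      have h1 : |r₂| < |q| := lt_trans hr₂lt hr₁lt
      rw [Int.abs_eq_natAbs, Int.abs_eq_natAbs] at h1
      omega
    obtain ⟨L₂, hL₂ne, ⟨l₂, hl₂⟩, hL₂mem, hL₂tails, hL₂val⟩ :=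
      IH r₂.natAbs hdec r₁ r₂ le_rfl hr₂odd hr₁even hcopB hr₂lt
    have hq0' : (q : ℚ) ≠ 0 := Int.cast_ne_zero.mpr hq0
    have hr₁0' : (r₁ : ℚ) ≠ 0 := Int.cast_ne_zero.mpr hr₁0
    have hp0' : (p : ℚ) ≠ 0 := Int.cast_ne_zero.mpr hp0
    have hv₁ : cfVal (2*m₂ :: L₂) = (q:ℚ)/r₁ := by
      rw [cfVal_cons _ _ hL₂ne, hL₂val, frac_step m₂ q r₁ r₂ hr₁0 hr₂0 hB]
      push_cast
      ring
    have hv₀ : cfVal (2*m₁ :: 2*m₂ :: L₂) = (p:ℚ)/q := by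
      rw [cfVal_cons _ _ (by simp), hv₁, frac_step m₁ p q r₁ hq0 hr₁0 hA]
      push_cast
      ring
    refine ⟨2*m₁ :: 2*m₂ :: L₂, by simp, ⟨l₂ + 1, by simp [hl₂]; ring⟩, ?_, ?_, hv₀⟩
    · intro c hc
      simp at hc
      rcases hc with rfl | rfl | hc
      · exact ⟨⟨m₁, by ring⟩, by omega⟩
      · exact ⟨⟨m₂, by ring⟩, by omega⟩
      · exact hL₂mem c hc
    · intro i hi
      match i with
      | 0 => rw [List.drop_zero, hv₀]; exact div_ne_zero hp0' hq0'
      | 1 => show cfVal (2*m₂ :: L₂) ≠ 0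
             rw [hv₁]; exact div_ne_zero hq0' hr₁0'
      | (j+2) =>
        show cfVal (L₂.drop j) ≠ 0
        apply hL₂tails
        simp at hi
        omega

lemma range_map_getD (L : List ℤ) (hE : ∀ c ∈ L, Even c) :
    (List.range L.length).map (fun i => 2 * (L.getD i 2 / 2)) = L := by
  induction L with
  | nil => simp
  | cons c cs ih =>
    have hc : Even c := hE c (by simp)
    rw [List.length_cons, List.range_succ_eq_map, List.map_cons, List.map_map]
    have h2 : 2 * ((c :: cs).getD 0 2 / 2) = c := by
      rw [Int.even_iff] at hc
      simp only [List.getD_cons_zero]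
      omega
    rw [h2]
    congr 1
    have hfun : ((fun i => 2 * ((c :: cs).getD i 2 / 2)) ∘ Nat.succ) =
        fun i => 2 * (cs.getD i 2 / 2) := by
      funext i
      simp [List.getD_cons_succ]
    rw [hfun]
    exact ih (fun x hx => hE x (by simp [hx]))

theorem continued_fraction_expansion_alpha_even_beta_odd
    (α β : ℤ) (hcop : IsCoprime α β) (hαeven : Even α) (hαne : α ≠ 0) (hβodd : Odd β) :
    ∃ (l : ℕ) (m : ℕ → ℤ),
      (∀ i : ℕ, 1 ≤ i → i ≤ 2 * l + 1 → m i ≠ 0) ∧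
      CFWellDef ((List.range (2 * l + 2)).map fun i => 2 * m i) ∧
      cfVal ((List.range (2 * l + 2)).map fun i => 2 * m i) = (β : ℚ) / (α : ℚ) := by
  have hα2 : 2 ≤ |α| := by
    rw [Int.even_iff] at hαeven
    have := abs_pos.mpr hαne
    rcases abs_cases α with ⟨h, h'⟩ | ⟨h, h'⟩ <;> omega
  obtain ⟨m₀, r₀, hA, hr₀0, hr₀lt⟩ :=
    choose_r β α hα2 (not_dvd_of_coprime β α hcop.symm hα2)
  have hr₀odd : Odd r₀ := by
    obtain ⟨t, ht⟩ : ∃ t, β = 2*t + r₀ := ⟨m₀*α, by linarith⟩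
    rw [Int.odd_iff] at hβodd ⊢
    rw [Int.even_iff] at hαeven
    omega
  have hcopA : IsCoprime α r₀ := by
    have := (hcop.symm.add_mul_left_left (-(2*m₀))).symm
    have he : β + α * (-(2*m₀)) = r₀ := by linarith
    rwa [he] at this
  obtain ⟨L, hLne, ⟨l, hl⟩, hLmem, hLtails, hLval⟩ :=
    build r₀.natAbs α r₀ le_rfl hr₀odd hαeven hcopA hr₀lt
  set Lf : List ℤ := 2*m₀ :: L with hLf
  have hLflen : Lf.length = 2*l + 2 := by simp [hLf, hl]
  have hLfE : ∀ c ∈ Lf, Even c := by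
    intro c hc
    rcases List.mem_cons.mp hc with rfl | hc
    · exact ⟨m₀, by ring⟩
    · exact (hLmem c hc).1
  refine ⟨l, fun i => Lf.getD i 2 / 2, ?_, ?_, ?_⟩
  · intro i hi1 hi2
    have hiL : i - 1 < L.length := by omega
    have hg : Lf.getD i 2 = L.getD (i-1) 2 := by
      rcases Nat.exists_eq_add_of_le hi1 with ⟨j, rfl⟩
      simp [hLf, Nat.add_comm 1 j, List.getD_cons_succ]
    show Lf.getD i 2 / 2 ≠ 0
    rw [hg, List.getD_eq_getElem L 2 hiL]
    have := hLmem (L[i-1]) (List.getElem_mem hiL)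
    rcases this with ⟨hev, hne⟩
    rw [Int.even_iff] at hev
    intro h
    apply hne
    omega
  · have hmap : (List.range (2*l+2)).map (fun i => 2 * (Lf.getD i 2 / 2)) = Lf := by
      rw [← hLflen]; exact range_map_getD Lf hLfE
    rw [hmap]
    intro i hi1 hi2
    rw [hLflen] at hi2
    rcases Nat.exists_eq_add_of_le hi1 with ⟨j, rfl⟩
    have : Lf.drop (1 + j) = L.drop j := by simp [hLf, Nat.add_comm 1 j]
    rw [this]
    exact hLtails j (by omega)
  · have hmap : (List.range (2*l+2)).map (fun i => 2 * (Lf.getD i 2 / 2)) = Lf := by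
      rw [← hLflen]; exact range_map_getD Lf hLfE
    rw [hmap, hLf, cfVal_cons _ _ hLne, hLval,
      frac_step m₀ β α r₀ hαne hr₀0 hA]
    push_cast
    ring
end

section
/- Let k ≥ 2 be an integer. Let R₋₁, R₀, R₁, R'₁, R₂, R'₂ and, for each integer i with 2 ≤ i ≤ k, R_{2i−1}, R'_{2i−1}, R_{2i}, R'_{2i} be 2×2 matrices over ℂ[t, t⁻¹] whose supports satisfy: supp R₋₁ ⊆ {−1, 0}; supp R₀ ⊆ {0, 1}; supp R₁ ⊆ {0, 1}; supp R'₁ ⊆ {0, 1}; supp R₂ ⊆ {1, 2}; supp R'₂ ⊆ {1, 2}; for even i with 2 ≤ i ≤ k: supp R_{2i−1} ⊆ {−2, −1}, supp R'_{2i−1} ⊆ {−1, 0}, supp R_{2i} ⊆ {−1, 0}, supp R'_{2i} ⊆ {0, 1}; and for odd i with 3 ≤ i ≤ k: supp R_{2i−1} ⊆ {−1, 0}, supp R'_{2i−1} ⊆ {0, 1}, supp R_{2i} ⊆ {0, 1}, supp R'_{2i} ⊆ {1, 2}. Define N₀ = R₀, N₁ = R₁ − R'₁ R₋₁, N₂ =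 R₂ − R'₂ R₋₁, and for 2 ≤ i ≤ k: N_{2i−1} = −R_{2i−1} N_{2i−4} − R'_{2i−1} N_{2i−3} and N_{2i} = −R_{2i} N_{2i−4} − R'_{2i} N_{2i−3}. Then for every 1 ≤ i ≤ k: if i is even, supp N_{2i−1} ⊆ {−i/2−1, …, i/2} and supp N_{2i} ⊆ {−i/2, …, i/2+1}; if i is odd, supp N_{2i−1} ⊆ {−(i+1)/2, …, (i+1)/2} and supp N_{2i} ⊆ {−(i−1)/2, …, (i+3)/2}. -/
/-- The coefficient of `t^j` in a Laurent polynomial. -/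
noncomputable def lcoeff (p : LaurentPolynomial ℂ) (j : ℤ) : ℂ := (AddMonoidAlgebra.coeff p : ℤ →₀ ℂ) j

/-- `SuppIn P S` : the support of the Laurent polynomial matrix `P` is contained in `S`. -/
def SuppIn (P : Matrix (Fin 2) (Fin 2) (LaurentPolynomial ℂ)) (S : Set ℤ) : Prop :=
  ∀ j : ℤ, j ∉ S → ∀ a b : Fin 2, lcoeff (P a b) j = 0
lemma lc_mul (p q : LaurentPolynomial ℂ) {a b c d j : ℤ}
    (hp : ∀ x, x ∉ Set.Icc a b → lcoeff p x = 0)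
    (hq : ∀ x, x ∉ Set.Icc c d → lcoeff q x = 0)
    (hj : j ∉ Set.Icc (a+c) (b+d)) : lcoeff (p*q) j = 0 := by
  unfold lcoeff at *
  by_contra h
  have hjmem : j ∈ (AddMonoidAlgebra.coeff (p * q)).support := Finsupp.mem_support_iff.2 h
  have h2 := AddMonoidAlgebra.support_coeff_mul_subset p q hjmem
  rw [Finset.mem_add] at h2
  obtain ⟨x, hx, y, hy, hxy⟩ := h2
  have hxm : x ∈ Set.Icc a b := by
    by_contra hc; exact (Finsupp.mem_support_iff.1 hx) (hp x hc)
  have hym : y ∈ Set.Icc c d := by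
    by_contra hc; exact (Finsupp.mem_support_iff.1 hy) (hq y hc)
  simp only [Set.mem_Icc] at *
  omega

lemma suppIn_mul {P Q : Matrix (Fin 2) (Fin 2) (LaurentPolynomial ℂ)} {a b c d : ℤ}
    (hP : SuppIn P (Set.Icc a b)) (hQ : SuppIn Q (Set.Icc c d)) :
    SuppIn (P * Q) (Set.Icc (a+c) (b+d)) := by
  intro j hj x y
  rw [Matrix.mul_apply]
  have h0 : ∀ z : Fin 2, lcoeff (P x z * Q z y) j = 0 := fun z =>
    lc_mul _ _ (fun w hw => hP w hw x z) (fun w hw => hQ w hw z y) hj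
  show lcoeff (∑ z, P x z * Q z y) j = 0
  unfold lcoeff at *
  rw [AddMonoidAlgebra.coeff_sum, Finsupp.finset_sum_apply]
  exact Finset.sum_eq_zero fun z _ => h0 z

lemma suppIn_mono {P : Matrix (Fin 2) (Fin 2) (LaurentPolynomial ℂ)} {S T : Set ℤ}
    (hP : SuppIn P S) (hST : S ⊆ T) : SuppIn P T :=
  fun j hj => hP j (fun hjs => hj (hST hjs))

lemma suppIn_Icc_of {P : Matrix (Fin 2) (Fin 2) (LaurentPolynomial ℂ)} {a b lo hi : ℤ}
    (h : SuppIn P (Set.Icc a b)) (h1 : lo ≤ a) (h2 : b ≤ hi) : SuppIn P (Set.Icc lo hi) :=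
  suppIn_mono h (Set.Icc_subset_Icc h1 h2)

lemma suppIn_pair {P : Matrix (Fin 2) (Fin 2) (LaurentPolynomial ℂ)} {x y : ℤ}
    (h : SuppIn P ({x, y} : Set ℤ)) (hxy : x ≤ y) : SuppIn P (Set.Icc x y) := by
  refine suppIn_mono h ?_
  intro z hz
  rcases hz with rfl | hz
  · exact Set.mem_Icc.2 ⟨le_rfl, hxy⟩
  · rw [Set.mem_singleton_iff] at hz; subst hz; exact Set.mem_Icc.2 ⟨hxy, le_rfl⟩

lemma suppIn_sub {P Q : Matrix (Fin 2) (Fin 2) (LaurentPolynomial ℂ)} {S : Set ℤ}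
    (hP : SuppIn P S) (hQ : SuppIn Q S) : SuppIn (P - Q) S := by
  intro j hj x y
  show lcoeff (P x y - Q x y) j = 0
  have h1 : (AddMonoidAlgebra.coeff (P x y) : ℤ →₀ ℂ) j = 0 := hP j hj x y
  have h2 : (AddMonoidAlgebra.coeff (Q x y) : ℤ →₀ ℂ) j = 0 := hQ j hj x y
  unfold lcoeff
  rw [AddMonoidAlgebra.coeff_sub, Finsupp.sub_apply, h1, h2, sub_zero]

lemma suppIn_neg {P : Matrix (Fin 2) (Fin 2) (LaurentPolynomial ℂ)} {S : Set ℤ}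
    (hP : SuppIn P S) : SuppIn (-P) S := by
  intro j hj x y
  show lcoeff (-(P x y)) j = 0
  have h1 : (AddMonoidAlgebra.coeff (P x y) : ℤ →₀ ℂ) j = 0 := hP j hj x y
  unfold lcoeff
  rw [AddMonoidAlgebra.coeff_neg, Finsupp.neg_apply, h1, neg_zero]

lemma suppIn_combo {A P B Q : Matrix (Fin 2) (Fin 2) (LaurentPolynomial ℂ)}
    {a b c d e f g h lo hi : ℤ}
    (hA : SuppIn A (Set.Icc a b)) (hP : SuppIn P (Set.Icc c d))
    (hB : SuppIn B (Set.Icc e f)) (hQ : SuppIn Q (Set.Icc g h))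
    (h1 : lo ≤ a + c) (h2 : b + d ≤ hi) (h3 : lo ≤ e + g) (h4 : f + h ≤ hi) :
    SuppIn (-A * P - B * Q) (Set.Icc lo hi) :=
  suppIn_sub (suppIn_Icc_of (suppIn_mul (suppIn_neg hA) hP) h1 h2)
    (suppIn_Icc_of (suppIn_mul hB hQ) h3 h4)

theorem support_of_N_matrices
    (k : ℕ) (hk : 2 ≤ k)
    (Rm1 R0 : Matrix (Fin 2) (Fin 2) (LaurentPolynomial ℂ))
    (Rr Rr' : ℕ → Matrix (Fin 2) (Fin 2) (LaurentPolynomial ℂ))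
    (hRm1 : SuppIn Rm1 ({-1, 0} : Set ℤ))
    (hR0 : SuppIn R0 ({0, 1} : Set ℤ))
    (hR1 : SuppIn (Rr 1) ({0, 1} : Set ℤ))
    (hR1' : SuppIn (Rr' 1) ({0, 1} : Set ℤ))
    (hR2 : SuppIn (Rr 2) ({1, 2} : Set ℤ))
    (hR2' : SuppIn (Rr' 2) ({1, 2} : Set ℤ))
    (hReven : ∀ i : ℕ, 2 ≤ i → i ≤ k → Even i →
      SuppIn (Rr (2 * i - 1)) ({-2, -1} : Set ℤ) ∧
      SuppIn (Rr' (2 * i - 1)) ({-1, 0} : Set ℤ) ∧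
      SuppIn (Rr (2 * i)) ({-1, 0} : Set ℤ) ∧
      SuppIn (Rr' (2 * i)) ({0, 1} : Set ℤ))
    (hRodd : ∀ i : ℕ, 3 ≤ i → i ≤ k → Odd i →
      SuppIn (Rr (2 * i - 1)) ({-1, 0} : Set ℤ) ∧
      SuppIn (Rr' (2 * i - 1)) ({0, 1} : Set ℤ) ∧
      SuppIn (Rr (2 * i)) ({0, 1} : Set ℤ) ∧
      SuppIn (Rr' (2 * i)) ({1, 2} : Set ℤ))
    (N : ℕ → Matrix (Fin 2) (Fin 2) (LaurentPolynomial ℂ))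
    (hN0 : N 0 = R0)
    (hN1 : N 1 = Rr 1 - Rr' 1 * Rm1)
    (hN2 : N 2 = Rr 2 - Rr' 2 * Rm1)
    (hNodd : ∀ i : ℕ, 2 ≤ i → i ≤ k →
      N (2 * i - 1) = -(Rr (2 * i - 1)) * N (2 * i - 4) - Rr' (2 * i - 1) * N (2 * i - 3))
    (hNeven : ∀ i : ℕ, 2 ≤ i → i ≤ k →
      N (2 * i) = -(Rr (2 * i)) * N (2 * i - 4) - Rr' (2 * i) * N (2 * i - 3)) :
    ∀ i : ℕ, 1 ≤ i → i ≤ k →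
      (Even i →
        SuppIn (N (2 * i - 1)) (Set.Icc (-((i : ℤ) / 2) - 1) ((i : ℤ) / 2)) ∧
        SuppIn (N (2 * i)) (Set.Icc (-((i : ℤ) / 2)) ((i : ℤ) / 2 + 1))) ∧
      (Odd i →
        SuppIn (N (2 * i - 1)) (Set.Icc (-(((i : ℤ) + 1) / 2)) (((i : ℤ) + 1) / 2)) ∧
        SuppIn (N (2 * i)) (Set.Icc (-(((i : ℤ) - 1) / 2)) (((i : ℤ) + 3) / 2))) := by

  have hSn0 : SuppIn (N 0) (Set.Icc (0:ℤ) 1) := by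
    rw [hN0]; exact suppIn_pair hR0 (by norm_num)
  have hSn1 : SuppIn (N 1) (Set.Icc (-1:ℤ) 1) := by
    rw [hN1]
    exact suppIn_sub (suppIn_Icc_of (suppIn_pair hR1 (by norm_num)) (by norm_num) (by norm_num))
      (suppIn_Icc_of (suppIn_mul (suppIn_pair hR1' (by norm_num)) (suppIn_pair hRm1 (by norm_num)))
        (by norm_num) (by norm_num))
  have hSn2 : SuppIn (N 2) (Set.Icc (0:ℤ) 2) := by
    rw [hN2]
    exact suppIn_sub (suppIn_Icc_of (suppIn_pair hR2 (by norm_num)) (by norm_num) (by norm_num))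
      (suppIn_Icc_of (suppIn_mul (suppIn_pair hR2' (by norm_num)) (suppIn_pair hRm1 (by norm_num)))
        (by norm_num) (by norm_num))
  intro i
  induction i using Nat.strong_induction_on with
  | _ i IH =>
  intro hi1 hik
  by_cases hi1' : i = 1
  · subst hi1'
    refine ⟨fun he => absurd he (by decide), fun _ => ⟨?_, ?_⟩⟩
    · have e : 2*1-1 = 1 := by norm_num
      rw [e]
      exact suppIn_Icc_of hSn1 (by norm_num) (by norm_num)
    · have e : 2*1 = 2 := by norm_num
      rw [e]
      exact suppIn_Icc_of hSn2 (by norm_num) (by norm_num)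
  by_cases hi2' : i = 2
  · subst hi2'
    obtain ⟨hA, hB, hC, hD⟩ := hReven 2 le_rfl hk (by decide)
    have e0 : 2*2-4 = 0 := by norm_num
    have e1 : 2*2-3 = 1 := by norm_num
    refine ⟨fun _ => ⟨?_, ?_⟩, fun ho => absurd ho (by decide)⟩
    · rw [hNodd 2 le_rfl hk, e0, e1]
      exact suppIn_combo (suppIn_pair hA (by norm_num)) hSn0 (suppIn_pair hB (by norm_num))
        hSn1 (by norm_num) (by norm_num) (by norm_num) (by norm_num)
    · rw [hNeven 2 le_rfl hk, e0, e1]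
      exact suppIn_combo (suppIn_pair hC (by norm_num)) hSn0 (suppIn_pair hD (by norm_num))
        hSn1 (by norm_num) (by norm_num) (by norm_num) (by norm_num)
  -- now i ≥ 3
  have hi3 : 3 ≤ i := by omega
  have IH1 := IH (i-1) (by omega) (by omega) (by omega)
  have IH2 := IH (i-2) (by omega) (by omega) (by omega)
  have e3 : 2*i-3 = 2*(i-1)-1 := by omega
  have e4 : 2*i-4 = 2*(i-2) := by omega
  rcases Nat.even_or_odd i with he | ho
  · obtain ⟨r, hr⟩ := he
    have H1 := (IH1.2 ⟨r-1, by omega⟩).1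
    have H2 := (IH2.1 ⟨r-1, by omega⟩).2
    obtain ⟨hA, hB, hC, hD⟩ := hReven i (by omega) hik ⟨r, hr⟩
    refine ⟨fun _ => ⟨?_, ?_⟩, fun ho => by obtain ⟨s, hs⟩ := ho; exfalso; omega⟩
    · rw [hNodd i (by omega) hik, e3, e4]
      exact suppIn_combo (suppIn_pair hA (by norm_num)) H2 (suppIn_pair hB (by norm_num)) H1
        (by omega) (by omega) (by omega) (by omega)
    · rw [hNeven i (by omega) hik, e3, e4]
      exact suppIn_combo (suppIn_pair hC (by norm_num)) H2 (suppIn_pair hD (by norm_num)) H1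
        (by omega) (by omega) (by omega) (by omega)
  · obtain ⟨r, hr⟩ := ho
    have H1 := (IH1.1 ⟨r, by omega⟩).1
    have H2 := (IH2.2 ⟨r-1, by omega⟩).2
    obtain ⟨hA, hB, hC, hD⟩ := hRodd i hi3 hik ⟨r, hr⟩
    refine ⟨fun he => by obtain ⟨s, hs⟩ := he; exfalso; omega, fun _ => ⟨?_, ?_⟩⟩
    · rw [hNodd i (by omega) hik, e3, e4]
      exact suppIn_combo (suppIn_pair hA (by norm_num)) H2 (suppIn_pair hB (by norm_num)) H1
        (by omega) (by omega) (by omega) (by omega)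
    · rw [hNeven i (by omega) hik, e3, e4]
      exact suppIn_combo (suppIn_pair hC (by norm_num)) H2 (suppIn_pair hD (by norm_num)) H1
        (by omega) (by omega) (by omega) (by omega)
end

section
/- Let R be a commutative ring, let k ≥ 2 be an integer, and let R₋₁, R₀ and R_j, R'_j (for 1 ≤ j ≤ 2k) be 2×2 matrices over R. Let A be the square matrix of block size (2k+3)×(2k+3) (each block a 2×2 matrix over R) whose blocks are: A[0,0] = R₋₁, A[0,1] = E; A[1,0] = R₀, A[1,2] = E; A[2,0] = R₁, A[2,1] = R'₁, A[2,3] = E; A[3,0] = R₂, A[3,1] = R'₂, A[3,4] = E; for each 2 ≤ i ≤ k: A[2i, 2i−2] = R_{2i−1}, A[2i, 2i−1] = R'_{2i−1}, A[2i, 2i+1] = E and A[2i+1, 2i−2] = R_{2i}, A[2i+1, 2i−1] = R'_{2i}, A[2i+1, 2i+2] = E; A[2k+2, 2k+2] = E; and all other blocks zero, where E denotes the 2×2 identity matrix. Define N₀ = R₀, N₁ = R₁ − R'₁ R₋₁, N₂ = R₂ − R'₂ R₋₁, and for 2 ≤ i ≤ k: N_{2i−1} = −R_{2i−1} N_{2i−4}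 − R'_{2i−1} N_{2i−3} and N_{2i} = −R_{2i} N_{2i−4} − R'_{2i} N_{2i−3}. Then det A = det N_{2k}. -/
/-- The 2×2 block in block-row `I` and block-column `J` of the matrix `A`
of Statement 4:  `A[0,0] = R₋₁`, `A[0,1] = E`; `A[1,0] = R₀`, `A[1,2] = E`;
for `1 ≤ i ≤ k`: `A[2i, 2i−2] = R_{2i−1}`, `A[2i, 2i−1] = R'_{2i−1}`,
`A[2i, 2i+1] = E`, `A[2i+1, 2i−2] = R_{2i}`, `A[2i+1, 2i−1] = R'_{2i}`,
`A[2i+1, 2i+2] = E`; `A[2k+2, 2k+2] = E`; all other blocks zero.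
Here `Rm1 = R₋₁`, `R0 = R₀`, `Rr j = R_j` and `Rr' j = R'_j`. -/
def blockEntry {R : Type*} [CommRing R] (k : ℕ)
    (Rm1 R0 : Matrix (Fin 2) (Fin 2) R) (Rr Rr' : ℕ → Matrix (Fin 2) (Fin 2) R)
    (I J : ℕ) : Matrix (Fin 2) (Fin 2) R :=
  if I = 0 then (if J = 0 then Rm1 else if J = 1 then 1 else 0)
  else if I = 1 then (if J = 0 then R0 else if J = 2 then 1 else 0)
  else if I = 2 * k + 2 then (if J = 2 * k + 2 then 1 else 0)
  else if I % 2 = 0 then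
    -- `I = 2i` with `1 ≤ i ≤ k`
    (if J = I - 2 then Rr (I - 1) else if J = I - 1 then Rr' (I - 1)
      else if J = I + 1 then 1 else 0)
  else
    -- `I = 2i + 1` with `1 ≤ i ≤ k`
    (if J = I - 3 then Rr (I - 1) else if J = I - 2 then Rr' (I - 1)
      else if J = I + 1 then 1 else 0)

namespace DetBlockAux

open Matrix Finset Equiv

variable {R : Type*} [CommRing R]

/-- Big matrix built from a block function. -/
def bigM (n : ℕ) (f : ℕ → ℕ → Matrix (Fin 2) (Fin 2) R) :
    Matrix (Fin n × Fin 2) (Fin n × Fin 2) R :=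
  Matrix.of fun p q => f p.1 q.1 p.2 q.2

lemma bigM_ext {n : ℕ} {f g : ℕ → ℕ → Matrix (Fin 2) (Fin 2) R}
    (h : ∀ I, I < n → ∀ J, J < n → f I J = g I J) : bigM n f = bigM n g := by
  ext p q
  show f p.1 q.1 p.2 q.2 = g p.1 q.1 p.2 q.2
  rw [h _ p.1.isLt _ q.1.isLt]

lemma bigM_mul (n : ℕ) (f g : ℕ → ℕ → Matrix (Fin 2) (Fin 2) R) :
    bigM n f * bigM n g = bigM n fun I J => ∑ K ∈ range n, f I K * g K J := by
  ext p q
  show (bigM n f * bigM n g) p q = (∑ K ∈ range n, f p.1 K * g K q.1) p.2 q.2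
  rw [Matrix.mul_apply, Matrix.sum_apply]
  rw [← Fin.sum_univ_eq_sum_range (fun K => (f p.1 K * g K q.1) p.2 q.2) n]
  rw [Fintype.sum_prod_type]
  refine Finset.sum_congr rfl fun K _ => ?_
  rw [Matrix.mul_apply]
  rfl

lemma det_bigM_of_lower (n : ℕ) (f : ℕ → ℕ → Matrix (Fin 2) (Fin 2) R)
    (h : ∀ I, I < n → ∀ J, J < n → I < J → f I J = 0) :
    (bigM n f).det = ∏ I ∈ range n, (f I I).det := by
  rw [← Matrix.det_transpose]
  have hbt : ((bigM n f)ᵀ).BlockTriangular (fun p : Fin n × Fin 2 => p.1) := by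
    intro p q hpq
    show f q.1 p.1 q.2 p.2 = 0
    rw [h _ q.1.isLt _ p.1.isLt (by exact_mod_cast hpq)]
    rfl
  rw [hbt.det_fintype]
  rw [← Fin.prod_univ_eq_prod_range (fun I => (f I I).det) n]
  refine Finset.prod_congr rfl fun a _ => ?_
  let e : {p : Fin n × Fin 2 // p.1 = a} ≃ Fin 2 :=
    { toFun := fun p => p.1.2
      invFun := fun i => ⟨(a, i), rfl⟩
      left_inv := by rintro ⟨⟨pa, pi⟩, hp⟩; cases hp; rfl
      right_inv := fun i => rfl }
  have hsb : ((bigM n f)ᵀ.toSquareBlock (fun p : Fin n × Fin 2 => p.1) a)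
      = ((f a a)ᵀ).submatrix e e := by
    ext p q
    obtain ⟨⟨pa, pi⟩, hp⟩ := p
    obtain ⟨⟨qa, qi⟩, hq⟩ := q
    cases hp
    cases hq
    rfl
  rw [hsb, Matrix.det_submatrix_equiv_self, Matrix.det_transpose]

lemma sum_range_one_pt {M : Type*} [AddCommMonoid M] {n a : ℕ} (f : ℕ → M) (ha : a < n)
    (h : ∀ k, k < n → k ≠ a → f k = 0) : ∑ k ∈ range n, f k = f a :=
  Finset.sum_eq_single_of_mem a (mem_range.2 ha)
    (fun b hb hba => h b (mem_range.1 hb) hba)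

lemma sum_range_two_pt {M : Type*} [AddCommMonoid M] {n a b : ℕ} (f : ℕ → M)
    (hab : a < b) (hb : b < n)
    (h : ∀ k, k < n → k ≠ a → k ≠ b → f k = 0) :
    ∑ k ∈ range n, f k = f a + f b := by
  have hsub : ({a, b} : Finset ℕ) ⊆ range n := by
    intro x hx
    simp only [mem_insert, mem_singleton] at hx
    rcases hx with rfl | rfl <;> exact mem_range.2 (by omega)
  rw [← Finset.sum_subset hsub (fun x hx hxs => by
      simp only [mem_insert, mem_singleton, not_or] at hxs
      exact h x (mem_range.1 hx) hxs.1 hxs.2)]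
  rw [Finset.sum_insert (by simp; omega), Finset.sum_singleton]

lemma sum_range_three_pt {M : Type*} [AddCommMonoid M] {n a b c : ℕ} (f : ℕ → M)
    (hab : a < b) (hbc : b < c) (hc : c < n)
    (h : ∀ k, k < n → k ≠ a → k ≠ b → k ≠ c → f k = 0) :
    ∑ k ∈ range n, f k = f a + f b + f c := by
  have hsub : ({a, b, c} : Finset ℕ) ⊆ range n := by
    intro x hx
    simp only [mem_insert, mem_singleton] at hx
    rcases hx with rfl | rfl | rfl <;> exact mem_range.2 (by omega)
  rw [← Finset.sum_subset hsub (fun x hx hxs => by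
      simp only [mem_insert, mem_singleton, not_or] at hxs
      exact h x (mem_range.1 hx) hxs.1 hxs.2.1 hxs.2.2)]
  rw [Finset.sum_insert (by simp only [mem_insert, mem_singleton]; omega),
    Finset.sum_insert (by simp only [mem_singleton]; omega),
    Finset.sum_singleton, add_assoc]

/-- The (block) column-operation matrix `T`. -/
def Tb (Rm1 : Matrix (Fin 2) (Fin 2) R) (N : ℕ → Matrix (Fin 2) (Fin 2) R)
    (I J : ℕ) : Matrix (Fin 2) (Fin 2) R :=
  if I = J then 1 else if J = 0 then (if I = 1 then -Rm1 else -(N (I - 2))) else 0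

/-- `W = T · P` where `P` is the block cyclic shift. -/
def Wb (k : ℕ) (Rm1 : Matrix (Fin 2) (Fin 2) R) (N : ℕ → Matrix (Fin 2) (Fin 2) R)
    (K J : ℕ) : Matrix (Fin 2) (Fin 2) R :=
  if J = 2 * k + 2 then (if K = 0 then 1 else if K = 1 then -Rm1 else -(N (K - 2)))
  else if K = J + 1 then 1 else 0

/-- The lower-triangular result `L = A · W`. -/
def Lb {R : Type*} [CommRing R] (k : ℕ)
    (Rm1 R0 : Matrix (Fin 2) (Fin 2) R) (Rr Rr' : ℕ → Matrix (Fin 2) (Fin 2) R)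
    (N : ℕ → Matrix (Fin 2) (Fin 2) R) (I J : ℕ) : Matrix (Fin 2) (Fin 2) R :=
  if J = 2 * k + 2 then (if I = 2 * k + 2 then -(N (2 * k)) else 0)
  else blockEntry k Rm1 R0 Rr Rr' I (J + 1)

lemma Wb_eq_Tb (k : ℕ) (Rm1 : Matrix (Fin 2) (Fin 2) R) (N : ℕ → Matrix (Fin 2) (Fin 2) R)
    (K J : ℕ) :
    Wb k Rm1 N K J = Tb Rm1 N K (if J = 2 * k + 2 then 0 else J + 1) := by
  unfold Wb Tb
  rcases eq_or_ne J (2 * k + 2) with h | h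
  · rw [if_pos h, if_pos h]
    rcases eq_or_ne K 0 with rfl | h0
    · rw [if_pos rfl, if_pos rfl]
    · rw [if_neg h0, if_neg h0, if_pos rfl]
  · rw [if_neg h, if_neg h]
    rcases eq_or_ne K (J + 1) with rfl | h1
    · rw [if_pos rfl, if_pos rfl]
    · rw [if_neg h1, if_neg h1, if_neg (by omega)]

lemma det_W (k : ℕ) (Rm1 : Matrix (Fin 2) (Fin 2) R) (N : ℕ → Matrix (Fin 2) (Fin 2) R) :
    (bigM (2 * k + 3) (Wb k Rm1 N)).det = 1 := by
  have hW : bigM (2 * k + 3) (Wb k Rm1 N)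
      = (bigM (2 * k + 3) (Tb Rm1 N)).submatrix id
          (Equiv.prodCongrLeft fun _ : Fin 2 => finRotate (2 * k + 3)) := by
    ext ⟨p1, p2⟩ ⟨q1, q2⟩
    show Wb k Rm1 N p1 q1 p2 q2
        = Tb Rm1 N p1 ((finRotate (2 * k + 3) q1 : Fin (2 * k + 3)) : ℕ) p2 q2
    have hval : ((finRotate (2 * k + 3) q1 : Fin (2 * k + 3)) : ℕ)
        = if (q1 : ℕ) = 2 * k + 2 then 0 else (q1 : ℕ) + 1 := by
      rw [show (finRotate (2 * k + 3) q1 : Fin (2 * k + 3))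
            = finRotate ((2 * k + 2) + 1) q1 from rfl,
        coe_finRotate]
      rcases eq_or_ne ((q1 : ℕ)) (2 * k + 2) with h | h
      · rw [if_pos (by ext; simpa using h), if_pos h]
      · rw [if_neg (by simp only [Fin.ext_iff, Fin.val_last]; exact h), if_neg h]
    rw [hval, Wb_eq_Tb]
  rw [hW, Matrix.det_permute']
  have hsign : Equiv.Perm.sign (Equiv.prodCongrLeft fun _ : Fin 2 => finRotate (2 * k + 3))
      = 1 := by
    rw [Equiv.Perm.sign_prodCongrLeft]
    rw [Fin.prod_univ_two]
    exact Int.units_mul_self _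
  rw [hsign]
  have hT : (bigM (2 * k + 3) (Tb Rm1 N)).det = 1 := by
    rw [det_bigM_of_lower _ _ (fun I hI J hJ hIJ => by
      unfold Tb
      rw [if_neg (by omega), if_neg (by omega)])]
    refine Finset.prod_eq_one fun I _ => ?_
    unfold Tb
    rw [if_pos rfl, Matrix.det_one]
  rw [hT]
  simp

lemma blockEntry_zero_of_gt {R : Type*} [CommRing R] (k : ℕ)
    (Rm1 R0 : Matrix (Fin 2) (Fin 2) R) (Rr Rr' : ℕ → Matrix (Fin 2) (Fin 2) R)
    (I J : ℕ) (hJ : I + 2 ≤ J) : blockEntry k Rm1 R0 Rr Rr' I J = 0 := by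
  unfold blockEntry
  split_ifs <;> first | rfl | contradiction | (exfalso; omega)

lemma blockEntry_succ_diag {R : Type*} [CommRing R] (k : ℕ)
    (Rm1 R0 : Matrix (Fin 2) (Fin 2) R) (Rr Rr' : ℕ → Matrix (Fin 2) (Fin 2) R)
    (I : ℕ) (hI : I < 2 * k + 2) : blockEntry k Rm1 R0 Rr Rr' I (I + 1) = 1 := by
  unfold blockEntry
  split_ifs <;> first | rfl | contradiction | (exfalso; omega)

end DetBlockAux

open Matrix Finset DetBlockAux in
theorem det_block_matrix_eq_det_N {R : Type*} [CommRing R] (k : ℕ) (hk : 2 ≤ k)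
    (Rm1 R0 : Matrix (Fin 2) (Fin 2) R) (Rr Rr' : ℕ → Matrix (Fin 2) (Fin 2) R)
    (N : ℕ → Matrix (Fin 2) (Fin 2) R)
    (hN0 : N 0 = R0)
    (hN1 : N 1 = Rr 1 - Rr' 1 * Rm1)
    (hN2 : N 2 = Rr 2 - Rr' 2 * Rm1)
    (hNodd : ∀ i : ℕ, 2 ≤ i → i ≤ k →
      N (2 * i - 1) = -(Rr (2 * i - 1)) * N (2 * i - 4) - Rr' (2 * i - 1) * N (2 * i - 3))
    (hNeven : ∀ i : ℕ, 2 ≤ i → i ≤ k →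
      N (2 * i) = -(Rr (2 * i)) * N (2 * i - 4) - Rr' (2 * i) * N (2 * i - 3)) :
    (Matrix.of fun p q : Fin (2 * k + 3) × Fin 2 =>
        blockEntry k Rm1 R0 Rr Rr' p.1 q.1 p.2 q.2).det
      = (N (2 * k)).det := by
  classical
  set n := 2 * k + 3 with hn
  -- the key multiplicative identity A * W = L
  have rowsum : ∀ I, I < n → ∀ J, J < n →
      (∑ K ∈ range n, blockEntry k Rm1 R0 Rr Rr' I K * Wb k Rm1 N K J)
        = Lb k Rm1 R0 Rr Rr' N I J := by
    intro I hI J hJ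
    by_cases hJ2 : J = 2 * k + 2
    case neg =>
      unfold Wb Lb
      simp only [if_neg hJ2]
      rw [sum_range_one_pt (a := J + 1) _ (by omega)
        (fun K hK hne => by rw [if_neg hne, mul_zero])]
      rw [if_pos rfl, mul_one]
    case pos =>
      subst hJ2
      have hLbv : Lb k Rm1 R0 Rr Rr' N I (2 * k + 2)
          = if I = 2 * k + 2 then -(N (2 * k)) else 0 := if_pos rfl
      have hWv : ∀ K : ℕ, Wb k Rm1 N K (2 * k + 2)
          = if K = 0 then 1 else if K = 1 then -Rm1 else -(N (K - 2)) := fun K => if_pos rfl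
      set w : ℕ → Matrix (Fin 2) (Fin 2) R :=
        fun K => if K = 0 then 1 else if K = 1 then -Rm1 else -(N (K - 2)) with hw
      have hWv' : ∀ K : ℕ, Wb k Rm1 N K (2 * k + 2) = w K := hWv
      have w0 : w 0 = 1 := rfl
      have w1 : w 1 = -Rm1 := rfl
      have wge : ∀ K, 2 ≤ K → w K = -(N (K - 2)) := by
        intro K hK2
        simp only [hw]
        rw [if_neg (by omega), if_neg (by omega)]
      rw [hLbv]
      simp only [hWv']
      rcases Nat.lt_or_ge I 4 with h4 | h4
      · interval_cases I
        · -- I = 0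
          rw [sum_range_two_pt (a := 0) (b := 1) _ (by omega) (by omega)
            (fun K hK h0 h1 => by
              rw [show blockEntry k Rm1 R0 Rr Rr' 0 K = 0 by
                  unfold blockEntry
                  rw [if_pos rfl, if_neg h0, if_neg h1], zero_mul])]
          rw [if_neg (by omega), w0, w1]
          rw [show blockEntry k Rm1 R0 Rr Rr' 0 0 = Rm1 by
              unfold blockEntry; rw [if_pos rfl, if_pos rfl]]
          rw [show blockEntry k Rm1 R0 Rr Rr' 0 1 = 1 by
              unfold blockEntry; rw [if_pos rfl, if_neg (by omega), if_pos rfl]]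
          rw [mul_one, one_mul]
          exact add_neg_cancel Rm1
        · -- I = 1
          rw [sum_range_two_pt (a := 0) (b := 2) _ (by omega) (by omega)
            (fun K hK h0 h2 => by
              rw [show blockEntry k Rm1 R0 Rr Rr' 1 K = 0 by
                  unfold blockEntry
                  rw [if_neg (by omega), if_pos rfl, if_neg h0, if_neg h2], zero_mul])]
          rw [if_neg (by omega), w0, wge 2 (by omega)]
          rw [show blockEntry k Rm1 R0 Rr Rr' 1 0 = R0 by
              unfold blockEntry; rw [if_neg (by omega), if_pos rfl, if_pos rfl]]
          rw [show blockEntry k Rm1 R0 Rr Rr' 1 2 = 1 by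
              unfold blockEntry
              rw [if_neg (by omega), if_pos rfl, if_neg (by omega), if_pos rfl]]
          rw [mul_one, one_mul, show (2:ℕ) - 2 = 0 from rfl, hN0]
          exact add_neg_cancel R0
        · -- I = 2
          rw [sum_range_three_pt (a := 0) (b := 1) (c := 3) _ (by omega) (by omega) (by omega)
            (fun K hK h0 h1 h3 => by
              rw [show blockEntry k Rm1 R0 Rr Rr' 2 K = 0 by
                  unfold blockEntry
                  rw [if_neg (by omega), if_neg (by omega), if_neg (by omega),
                    if_pos (by omega), if_neg (by omega), if_neg (by omega),
                    if_neg (by omega)], zero_mul])]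
          rw [if_neg (by omega), w0, w1, wge 3 (by omega)]
          rw [show blockEntry k Rm1 R0 Rr Rr' 2 0 = Rr 1 by
              unfold blockEntry
              rw [if_neg (by omega), if_neg (by omega), if_neg (by omega),
                if_pos (by omega), if_pos (by omega)]]
          rw [show blockEntry k Rm1 R0 Rr Rr' 2 1 = Rr' 1 by
              unfold blockEntry
              rw [if_neg (by omega), if_neg (by omega), if_neg (by omega),
                if_pos (by omega), if_neg (by omega), if_pos (by omega)]]
          rw [show blockEntry k Rm1 R0 Rr Rr' 2 3 = 1 by
              unfold blockEntry
              rw [if_neg (by omega), if_neg (by omega), if_neg (by omega),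
                if_pos (by omega), if_neg (by omega), if_neg (by omega), if_pos rfl]]
          rw [show (3:ℕ) - 2 = 1 from rfl, hN1]
          noncomm_ring
        · -- I = 3
          rw [sum_range_three_pt (a := 0) (b := 1) (c := 4) _ (by omega) (by omega) (by omega)
            (fun K hK h0 h1 h4' => by
              rw [show blockEntry k Rm1 R0 Rr Rr' 3 K = 0 by
                  unfold blockEntry
                  rw [if_neg (by omega), if_neg (by omega), if_neg (by omega),
                    if_neg (by omega), if_neg (by omega), if_neg (by omega),
                    if_neg (by omega)], zero_mul])]
          rw [if_neg (by omega), w0, w1, wge 4 (by omega)]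
          rw [show blockEntry k Rm1 R0 Rr Rr' 3 0 = Rr 2 by
              unfold blockEntry
              rw [if_neg (by omega), if_neg (by omega), if_neg (by omega),
                if_neg (by omega), if_pos (by omega)]]
          rw [show blockEntry k Rm1 R0 Rr Rr' 3 1 = Rr' 2 by
              unfold blockEntry
              rw [if_neg (by omega), if_neg (by omega), if_neg (by omega),
                if_neg (by omega), if_neg (by omega), if_pos (by omega)]]
          rw [show blockEntry k Rm1 R0 Rr Rr' 3 4 = 1 by
              unfold blockEntry
              rw [if_neg (by omega), if_neg (by omega), if_neg (by omega),
                if_neg (by omega), if_neg (by omega), if_neg (by omega), if_pos rfl]]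
          rw [show (4:ℕ) - 2 = 2 from rfl, hN2]
          noncomm_ring
      · by_cases hItop : I = 2 * k + 2
        · subst hItop
          rw [sum_range_one_pt (a := 2 * k + 2) _ (by omega)
            (fun K hK hne => by
              rw [show blockEntry k Rm1 R0 Rr Rr' (2 * k + 2) K = 0 by
                  unfold blockEntry
                  rw [if_neg (by omega), if_neg (by omega), if_pos rfl, if_neg hne],
                zero_mul])]
          rw [if_pos rfl, wge (2 * k + 2) (by omega)]
          rw [show blockEntry k Rm1 R0 Rr Rr' (2 * k + 2) (2 * k + 2) = 1 by
              unfold blockEntry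
              rw [if_neg (by omega), if_neg (by omega), if_pos rfl, if_pos rfl]]
          rw [one_mul, show 2 * k + 2 - 2 = 2 * k by omega]
        · rcases Nat.even_or_odd I with hpar | hpar
          · -- I even, 4 ≤ I ≤ 2k, I = 2i with 2 ≤ i ≤ k
            obtain ⟨i, hi⟩ : ∃ i, I = 2 * i := by
              obtain ⟨r, hr⟩ := hpar; exact ⟨r, by omega⟩
            subst hi
            have hi2 : 2 ≤ i := by omega
            have hik : i ≤ k := by omega
            rw [sum_range_three_pt (a := 2 * i - 2) (b := 2 * i - 1) (c := 2 * i + 1) _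
              (by omega) (by omega) (by omega)
              (fun K hK ha hb hc => by
                rw [show blockEntry k Rm1 R0 Rr Rr' (2 * i) K = 0 by
                    unfold blockEntry
                    rw [if_neg (by omega), if_neg (by omega), if_neg (by omega),
                      if_pos (by omega), if_neg (by omega), if_neg (by omega),
                      if_neg (by omega)], zero_mul])]
            rw [if_neg (by omega), wge (2 * i - 2) (by omega), wge (2 * i - 1) (by omega),
              wge (2 * i + 1) (by omega)]
            rw [show blockEntry k Rm1 R0 Rr Rr' (2 * i) (2 * i - 2) = Rr (2 * i - 1) by
                unfold blockEntry
                rw [if_neg (by omega), if_neg (by omega), if_neg (by omega),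
                  if_pos (by omega), if_pos rfl]]
            rw [show blockEntry k Rm1 R0 Rr Rr' (2 * i) (2 * i - 1) = Rr' (2 * i - 1) by
                unfold blockEntry
                rw [if_neg (by omega), if_neg (by omega), if_neg (by omega),
                  if_pos (by omega), if_neg (by omega), if_pos rfl]]
            rw [show blockEntry k Rm1 R0 Rr Rr' (2 * i) (2 * i + 1) = 1 by
                unfold blockEntry
                rw [if_neg (by omega), if_neg (by omega), if_neg (by omega),
                  if_pos (by omega), if_neg (by omega), if_neg (by omega), if_pos rfl]]
            rw [show 2 * i - 2 - 2 = 2 * i - 4 by omega, show 2 * i - 1 - 2 = 2 * i - 3 by omega,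
              show 2 * i + 1 - 2 = 2 * i - 1 by omega]
            rw [hNodd i hi2 hik]
            noncomm_ring
          · -- I odd, 5 ≤ I ≤ 2k+1, I = 2i+1 with 2 ≤ i ≤ k
            obtain ⟨i, hi⟩ : ∃ i, I = 2 * i + 1 := by
              obtain ⟨r, hr⟩ := hpar; exact ⟨r, by omega⟩
            subst hi
            have hi2 : 2 ≤ i := by omega
            have hik : i ≤ k := by omega
            rw [sum_range_three_pt (a := 2 * i - 2) (b := 2 * i - 1) (c := 2 * i + 2) _
              (by omega) (by omega) (by omega)
              (fun K hK ha hb hc => by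
                rw [show blockEntry k Rm1 R0 Rr Rr' (2 * i + 1) K = 0 by
                    unfold blockEntry
                    rw [if_neg (by omega), if_neg (by omega), if_neg (by omega),
                      if_neg (by omega), if_neg (by omega), if_neg (by omega),
                      if_neg (by omega)], zero_mul])]
            rw [if_neg (by omega), wge (2 * i - 2) (by omega), wge (2 * i - 1) (by omega),
              wge (2 * i + 2) (by omega)]
            rw [show blockEntry k Rm1 R0 Rr Rr' (2 * i + 1) (2 * i - 2) = Rr (2 * i) by
                unfold blockEntry
                rw [if_neg (by omega), if_neg (by omega), if_neg (by omega),
                  if_neg (by omega), if_pos (by omega)]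
                congr 1]
            rw [show blockEntry k Rm1 R0 Rr Rr' (2 * i + 1) (2 * i - 1) = Rr' (2 * i) by
                unfold blockEntry
                rw [if_neg (by omega), if_neg (by omega), if_neg (by omega),
                  if_neg (by omega), if_neg (by omega), if_pos (by omega)]
                congr 1]
            rw [show blockEntry k Rm1 R0 Rr Rr' (2 * i + 1) (2 * i + 2) = 1 by
                unfold blockEntry
                rw [if_neg (by omega), if_neg (by omega), if_neg (by omega),
                  if_neg (by omega), if_neg (by omega), if_neg (by omega),
                  if_pos (by omega)]]
            rw [show 2 * i - 2 - 2 = 2 * i - 4 by omega, show 2 * i - 1 - 2 = 2 * i - 3 by omega,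
              show 2 * i + 2 - 2 = 2 * i by omega]
            rw [hNeven i hi2 hik]
            noncomm_ring
  have key : bigM n (blockEntry k Rm1 R0 Rr Rr') * bigM n (Wb k Rm1 N)
      = bigM n (Lb k Rm1 R0 Rr Rr' N) := by
    rw [bigM_mul]
    exact bigM_ext rowsum
  have hdet := congrArg Matrix.det key
  rw [Matrix.det_mul] at hdet
  rw [show (2 * k + 3) = n from rfl] at *
  have hW : (bigM n (Wb k Rm1 N) : Matrix (Fin n × Fin 2) (Fin n × Fin 2) R).det = 1 :=
    det_W k Rm1 N
  rw [hW, mul_one] at hdet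
  have hL : (bigM n (Lb k Rm1 R0 Rr Rr' N) : Matrix (Fin n × Fin 2) (Fin n × Fin 2) R).det
      = (N (2 * k)).det := by
    rw [det_bigM_of_lower _ _ (fun I hI J hJ hIJ => by
      unfold Lb
      rcases eq_or_ne J (2 * k + 2) with rfl | hne
      · rw [if_pos rfl, if_neg (by omega)]
      · rw [if_neg hne]
        exact blockEntry_zero_of_gt k Rm1 R0 Rr Rr' I (J + 1) (by omega))]
    rw [show n = (2 * k + 2) + 1 from rfl, Finset.prod_range_succ]
    have hlast : Lb k Rm1 R0 Rr Rr' N (2 * k + 2) (2 * k + 2) = -(N (2 * k)) := by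
      unfold Lb; rw [if_pos rfl, if_pos rfl]
    rw [hlast]
    have hdiag : ∀ I ∈ range (2 * k + 2), (Lb k Rm1 R0 Rr Rr' N I I).det = 1 := by
      intro I hIm
      have hIlt := mem_range.1 hIm
      unfold Lb
      rw [if_neg (by omega), blockEntry_succ_diag k Rm1 R0 Rr Rr' I hIlt, Matrix.det_one]
    rw [Finset.prod_congr rfl hdiag, Finset.prod_const_one, one_mul]
    rw [Matrix.det_neg]
    simp
  show (bigM n (blockEntry k Rm1 R0 Rr Rr') : Matrix (Fin n × Fin 2) (Fin n × Fin 2) R).det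
      = (N (2 * k)).det
  rw [hdet, hL]
end

section
/- Let p, q ≥ 0 be integers and let M, M', N, N' be 2×2 matrices over ℂ[t, t⁻¹] with supp M ⊆ {−p−1, …, p+1}, supp M' ⊆ {−p+1, …, p+1}, supp N ⊆ {−q, …, q}, and supp N' ⊆ {−q+1, …, q+1}. Let D ∈ ℂ[t, t⁻¹] be the determinant of the 4×4 block matrix with block rows (M, M') and (N, N'). Then supp D ⊆ {−2(p+q), …, 2(p+q)+4}, the coefficient of t^{2(p+q)+4} in D equals det(M_{p+1}) · det(N'_{q+1}), and the coefficient of t^{−2(p+q)} in D equals det(M_{−p−1}) · det(N'_{−q+1}), where P_j denotes the coefficient matrix of t^j in a Laurent polynomial matrix P. -/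
/-- The coefficient matrix of `t^j` in a matrix of Laurent polynomials. -/
noncomputable def coeffMatrix (P : Matrix (Fin 2) (Fin 2) (LaurentPolynomial ℂ)) (j : ℤ) :
    Matrix (Fin 2) (Fin 2) ℂ :=
  P.map fun p => lcoeff p j

lemma lcoeff_mul_bound (a b : LaurentPolynomial ℂ) (da db : ℤ)
    (ha : ∀ k, da < k → lcoeff a k = 0) (hb : ∀ k, db < k → lcoeff b k = 0) :
    (∀ k, da + db < k → lcoeff (a * b) k = 0) ∧
      lcoeff (a * b) (da + db) = lcoeff a da * lcoeff b db := by
  have key : ∀ k, lcoeff (a * b) k =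
      ∑ x ∈ a.coeff.support, ∑ y ∈ b.coeff.support, if x + y = k then a.coeff x * b.coeff y else 0 := by
    intro k
    rw [show lcoeff (a * b) k = (a * b).coeff k from rfl, AddMonoidAlgebra.coeff_mul]
    rfl
  constructor
  · intro k hk
    rw [key]
    refine Finset.sum_eq_zero fun x hx => Finset.sum_eq_zero fun y hy => ?_
    split_ifs with h
    · rcases lt_or_ge da x with h1 | h1
      · rw [show a.coeff x = lcoeff a x from rfl, ha x h1, zero_mul]
      · have : db < y := by omega
        rw [show b.coeff y = lcoeff b y from rfl, hb y this, mul_zero]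
    · rfl
  · rw [key]
    rw [Finset.sum_eq_single da]
    · rw [Finset.sum_eq_single db]
      · simp [lcoeff]
      · intro y _ hy
        rw [if_neg (by omega)]
      · intro hdb
        have : b.coeff db = 0 := Finsupp.notMem_support_iff.mp hdb
        simp [this]
    · intro x _ hx
      refine Finset.sum_eq_zero fun y hy => ?_
      split_ifs with h
      · rcases lt_or_ge da x with h1 | h1
        · rw [show a.coeff x = lcoeff a x from rfl, ha x h1, zero_mul]
        · have : db < y := by omega
          rw [show b.coeff y = lcoeff b y from rfl, hb y this, mul_zero]
      · rfl
    · intro hda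
      have : a.coeff da = 0 := Finsupp.notMem_support_iff.mp hda
      simp [this]

lemma lcoeff_one (k : ℤ) : lcoeff 1 k = if (0 : ℤ) = k then 1 else 0 := by
  rw [show lcoeff 1 k = (1 : LaurentPolynomial ℂ).coeff k from rfl,
    AddMonoidAlgebra.one_def, AddMonoidAlgebra.coeff_single, Finsupp.single_apply]

lemma lcoeff_prod_bound {ι : Type*} [DecidableEq ι] (s : Finset ι)
    (f : ι → LaurentPolynomial ℂ) (d : ι → ℤ)
    (h : ∀ i ∈ s, ∀ k, d i < k → lcoeff (f i) k = 0) :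
    (∀ k, (∑ i ∈ s, d i) < k → lcoeff (∏ i ∈ s, f i) k = 0) ∧
      lcoeff (∏ i ∈ s, f i) (∑ i ∈ s, d i) = ∏ i ∈ s, lcoeff (f i) (d i) := by
  induction s using Finset.induction with
  | empty =>
    refine ⟨fun k hk => ?_, ?_⟩
    · simp only [Finset.prod_empty, Finset.sum_empty] at *
      rw [lcoeff_one, if_neg (by omega)]
    · simp [lcoeff_one]
  | @insert a s hx ih =>
    have hrest := ih fun i hi => h i (Finset.mem_insert_of_mem hi)
    have ha := h a (Finset.mem_insert_self a s)
    rw [Finset.prod_insert hx, Finset.sum_insert hx, Finset.prod_insert hx]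
    exact ⟨(lcoeff_mul_bound _ _ _ _ ha hrest.1).1,
      (lcoeff_mul_bound _ _ _ _ ha hrest.1).2.trans (by rw [hrest.2])⟩

lemma lcoeff_sum {α : Type*} (s : Finset α) (f : α → LaurentPolynomial ℂ) (k : ℤ) :
    lcoeff (∑ x ∈ s, f x) k = ∑ x ∈ s, lcoeff (f x) k :=
  by
  show (AddMonoidAlgebra.coeff (∑ x ∈ s, f x)) k = _
  rw [AddMonoidAlgebra.coeff_sum]
  exact map_sum (Finsupp.applyAddHom k) (fun x => (f x).coeff) s

lemma lcoeff_det_high {ι : Type*} [DecidableEq ι] [Fintype ι]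
    (A : Matrix ι ι (LaurentPolynomial ℂ)) (r c : ι → ℤ)
    (h : ∀ i j k, r i + c j < k → lcoeff (A i j) k = 0) :
    (∀ k, (∑ i, r i) + (∑ i, c i) < k → lcoeff A.det k = 0) ∧
      lcoeff A.det ((∑ i, r i) + ∑ i, c i)
        = Matrix.det (Matrix.of fun i j => lcoeff (A i j) (r i + c j)) := by
  have hσ : ∀ σ : Equiv.Perm ι, ∑ i, (r (σ i) + c i) = (∑ i, r i) + ∑ i, c i := by
    intro σ; rw [Finset.sum_add_distrib, Equiv.sum_comp σ r]
  have hperm : ∀ σ : Equiv.Perm ι,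
      (∀ k, (∑ i, r i) + (∑ i, c i) < k → lcoeff (∏ i, A (σ i) i) k = 0) ∧
      lcoeff (∏ i, A (σ i) i) ((∑ i, r i) + ∑ i, c i)
        = ∏ i, lcoeff (A (σ i) i) (r (σ i) + c i) := by
    intro σ
    have := lcoeff_prod_bound Finset.univ (fun i => A (σ i) i) (fun i => r (σ i) + c i)
      (fun i _ k hk => h (σ i) i k hk)
    rwa [hσ σ] at this
  have hsmul : ∀ (u : ℤˣ) (x : LaurentPolynomial ℂ) (k : ℤ),
      lcoeff (u • x) k = u • lcoeff x k := by
    intro u x k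
    rw [Units.smul_def, Units.smul_def]
    exact AddMonoidAlgebra.coeff_smul_apply _ _ _
  rw [Matrix.det_apply]
  constructor
  · intro k hk
    rw [lcoeff_sum]
    refine Finset.sum_eq_zero fun σ _ => ?_
    rw [hsmul, (hperm σ).1 k hk, smul_zero]
  · rw [lcoeff_sum, Matrix.det_apply]
    refine Finset.sum_congr rfl fun σ _ => ?_
    rw [hsmul, (hperm σ).2]
    rfl

lemma lcoeff_det_low {ι : Type*} [DecidableEq ι] [Fintype ι]
    (A : Matrix ι ι (LaurentPolynomial ℂ)) (r c : ι → ℤ)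
    (h : ∀ i j k, k < r i + c j → lcoeff (A i j) k = 0) :
    (∀ k, k < (∑ i, r i) + (∑ i, c i) → lcoeff A.det k = 0) ∧
      lcoeff A.det ((∑ i, r i) + ∑ i, c i)
        = Matrix.det (Matrix.of fun i j => lcoeff (A i j) (r i + c j)) := by
  set e : LaurentPolynomial ℂ ≃ₐ[ℂ] LaurentPolynomial ℂ := LaurentPolynomial.invert
  have hA : ∀ (x : LaurentPolynomial ℂ) (k : ℤ), lcoeff (e x) k = lcoeff x (-k) :=
    fun x k => LaurentPolynomial.invert_apply x k
  have hdet : (A.map e).det = e A.det := (AlgEquiv.map_det e A).symm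
  have key := lcoeff_det_high (A.map e) (fun i => -r i) (fun i => -c i)
    (by intro i j k hk
        rw [Matrix.map_apply, hA]
        have hk' : -r i + -c j < k := hk
        exact h i j (-k) (by omega))
  simp only [Finset.sum_neg_distrib, hdet, hA] at key
  constructor
  · intro k hk
    have := key.1 (-k) (by omega)
    rwa [neg_neg] at this
  · have := key.2
    rw [show -(-(∑ i, r i) + -∑ i, c i) = (∑ i, r i) + ∑ i, c i by ring] at this
    rw [this]
    congr 1
    ext i j
    simp only [Matrix.of_apply, Matrix.map_apply, hA]
    congr 1
    ring

theorem det_fromBlocks_support_and_extreme_coeffs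
    (p q : ℕ) (M M' N N' : Matrix (Fin 2) (Fin 2) (LaurentPolynomial ℂ))
    (hM : SuppIn M (Set.Icc (-(p : ℤ) - 1) ((p : ℤ) + 1)))
    (hM' : SuppIn M' (Set.Icc (-(p : ℤ) + 1) ((p : ℤ) + 1)))
    (hN : SuppIn N (Set.Icc (-(q : ℤ)) (q : ℤ)))
    (hN' : SuppIn N' (Set.Icc (-(q : ℤ) + 1) ((q : ℤ) + 1))) :
    (∀ j : ℤ, j ∉ Set.Icc (-(2 * ((p : ℤ) + (q : ℤ)))) (2 * ((p : ℤ) + (q : ℤ)) + 4) →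
        lcoeff (Matrix.fromBlocks M M' N N').det j = 0) ∧
    lcoeff (Matrix.fromBlocks M M' N N').det (2 * ((p : ℤ) + (q : ℤ)) + 4)
      = (coeffMatrix M ((p : ℤ) + 1)).det * (coeffMatrix N' ((q : ℤ) + 1)).det ∧
    lcoeff (Matrix.fromBlocks M M' N N').det (-(2 * ((p : ℤ) + (q : ℤ))))
      = (coeffMatrix M (-(p : ℤ) - 1)).det * (coeffMatrix N' (-(q : ℤ) + 1)).det := by
  set A := Matrix.fromBlocks M M' N N' with hA
  -- upper bounds
  set rH : Fin 2 ⊕ Fin 2 → ℤ := Sum.elim (fun _ => (p : ℤ) + 1) (fun _ => (q : ℤ)) with hrH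
  set cH : Fin 2 ⊕ Fin 2 → ℤ := Sum.elim (fun _ => 0) (fun _ => 1) with hcH
  have hsumH : (∑ i, rH i) + (∑ i, cH i) = 2 * ((p : ℤ) + (q : ℤ)) + 4 := by
    simp [hrH, hcH, Fintype.sum_sum_type]
    ring
  have hhighhyp : ∀ i j k, rH i + cH j < k → lcoeff (A i j) k = 0 := by
    rintro (a | a) (b | b) k hk
    · exact hM k (by simp only [Set.mem_Icc, not_and, not_le]; intro; simp [hrH, hcH] at hk; omega) a b
    · exact hM' k (by simp only [Set.mem_Icc, not_and, not_le]; intro; simp [hrH, hcH] at hk; omega) a b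
    · exact hN k (by simp only [Set.mem_Icc, not_and, not_le]; intro; simp [hrH, hcH] at hk; omega) a b
    · exact hN' k (by simp only [Set.mem_Icc, not_and, not_le]; intro; simp [hrH, hcH] at hk; omega) a b
  have keyH := lcoeff_det_high A rH cH hhighhyp
  rw [hsumH] at keyH
  -- lower bounds
  set rL : Fin 2 ⊕ Fin 2 → ℤ := Sum.elim (fun _ => -(p : ℤ) - 1) (fun _ => -(q : ℤ)) with hrL
  set cL : Fin 2 ⊕ Fin 2 → ℤ := Sum.elim (fun _ => 0) (fun _ => 1) with hcL
  have hsumL : (∑ i, rL i) + (∑ i, cL i) = -(2 * ((p : ℤ) + (q : ℤ))) := by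
    simp [hrL, hcL, Fintype.sum_sum_type]
    ring
  have hlowhyp : ∀ i j k, k < rL i + cL j → lcoeff (A i j) k = 0 := by
    rintro (a | a) (b | b) k hk
    · exact hM k (by simp only [Set.mem_Icc, not_and, not_le]; simp [hrL, hcL] at hk; omega) a b
    · exact hM' k (by simp only [Set.mem_Icc, not_and, not_le]; simp [hrL, hcL] at hk; omega) a b
    · exact hN k (by simp only [Set.mem_Icc, not_and, not_le]; simp [hrL, hcL] at hk; omega) a b
    · exact hN' k (by simp only [Set.mem_Icc, not_and, not_le]; simp [hrL, hcL] at hk; omega) a b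
  have keyL := lcoeff_det_low A rL cL hlowhyp
  rw [hsumL] at keyL
  refine ⟨?_, ?_, ?_⟩
  · intro j hj
    simp only [Set.mem_Icc, not_and, not_le] at hj
    rcases lt_or_ge j (-(2 * ((p : ℤ) + (q : ℤ)))) with h1 | h1
    · exact keyL.1 j h1
    · exact keyH.1 j (by omega)
  · rw [keyH.2]
    have : (Matrix.of fun i j => lcoeff (A i j) (rH i + cH j))
        = Matrix.fromBlocks (coeffMatrix M ((p : ℤ) + 1)) 0
            (coeffMatrix N (q : ℤ)) (coeffMatrix N' ((q : ℤ) + 1)) := by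
      ext i j
      have hc0 : ∀ b : Fin 2, cH (Sum.inl b) = 0 := fun b => rfl
      have hc1 : ∀ b : Fin 2, cH (Sum.inr b) = 1 := fun b => rfl
      have hr0 : ∀ a : Fin 2, rH (Sum.inl a) = (p : ℤ) + 1 := fun a => rfl
      have hr1 : ∀ a : Fin 2, rH (Sum.inr a) = (q : ℤ) := fun a => rfl
      rcases i with a | a <;> rcases j with b | b
      · simp only [Matrix.of_apply, hA, Matrix.fromBlocks_apply₁₁, hc0, hr0, add_zero,
          coeffMatrix, Matrix.map_apply]
      · simp only [Matrix.of_apply, hA, Matrix.fromBlocks_apply₁₂, hc1, hr0,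
          Matrix.zero_apply]
        exact hM' ((p : ℤ) + 1 + 1) (by simp only [Set.mem_Icc, not_and, not_le]; omega) a b
      · simp only [Matrix.of_apply, hA, Matrix.fromBlocks_apply₂₁, hc0, hr1, add_zero,
          coeffMatrix, Matrix.map_apply]
      · simp only [Matrix.of_apply, hA, Matrix.fromBlocks_apply₂₂, hc1, hr1,
          coeffMatrix, Matrix.map_apply]
    rw [this, Matrix.det_fromBlocks_zero₁₂]
  · rw [keyL.2]
    have : (Matrix.of fun i j => lcoeff (A i j) (rL i + cL j))
        = Matrix.fromBlocks (coeffMatrix M (-(p : ℤ) - 1)) 0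
            (coeffMatrix N (-(q : ℤ))) (coeffMatrix N' (-(q : ℤ) + 1)) := by
      ext i j
      have hc0 : ∀ b : Fin 2, cL (Sum.inl b) = 0 := fun b => rfl
      have hc1 : ∀ b : Fin 2, cL (Sum.inr b) = 1 := fun b => rfl
      have hr0 : ∀ a : Fin 2, rL (Sum.inl a) = -(p : ℤ) - 1 := fun a => rfl
      have hr1 : ∀ a : Fin 2, rL (Sum.inr a) = -(q : ℤ) := fun a => rfl
      rcases i with a | a <;> rcases j with b | b
      · simp only [Matrix.of_apply, hA, Matrix.fromBlocks_apply₁₁, hc0, hr0, add_zero,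
          coeffMatrix, Matrix.map_apply]
      · simp only [Matrix.of_apply, hA, Matrix.fromBlocks_apply₁₂, hc1, hr0,
          Matrix.zero_apply]
        exact hM' (-(p : ℤ) - 1 + 1) (by simp only [Set.mem_Icc, not_and, not_le]; omega) a b
      · simp only [Matrix.of_apply, hA, Matrix.fromBlocks_apply₂₁, hc0, hr1, add_zero,
          coeffMatrix, Matrix.map_apply]
      · simp only [Matrix.of_apply, hA, Matrix.fromBlocks_apply₂₂, hc1, hr1,
          coeffMatrix, Matrix.map_apply]
    rw [this, Matrix.det_fromBlocks_zero₁₂]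
end

section
/- Let p be an integer. Let H_p be the presented group on three generators a, b, c with relators r₁ = (ba)² b⁻¹ c⁻¹ b a b⁻¹ c b (ba)⁻² c⁻¹ b a b⁻¹ c b (ba)⁻² a b a b⁻¹, r₂ = c (ba)² b⁻¹ c⁻¹ b a⁻¹ b⁻¹ c b a⁻¹ b⁻¹ a⁻¹ c⁻¹ a⁻¹ b⁻¹ a⁻¹ b a, and the additional relator c⁻¹ · a⁻¹([a, b][a⁻¹, b⁻¹])^p a. Let K_p be the presented group on two generators x, z with the single relator [x⁻¹, z⁻¹] x y x (z x z⁻¹) y⁻¹ · ( y z x (z x z⁻¹) y⁻¹ (z x z⁻¹)⁻¹ )⁻¹, where y abbreviates the word x⁻¹([x, z][x⁻¹, z⁻¹])^p x. Then the group homomorphism H_p → K_p determined by a ↦ x, b ↦ z, c ↦ x⁻¹([x, z][x⁻¹, z⁻¹])^p x is well defined and is an isomorphism. -/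
namespace Stmt14

open scoped commutatorElement

/-- The relators of the presented group `H_p` on the three generators
`a, b, c` (encoded as `0, 1, 2 : Fin 3`): the two relators `r₁, r₂` together
with the additional relator `c⁻¹ · a⁻¹([a,b][a⁻¹,b⁻¹])^p a`. -/
def relsH (p : ℤ) : Set (FreeGroup (Fin 3)) :=
  let a : FreeGroup (Fin 3) := FreeGroup.of 0
  let b : FreeGroup (Fin 3) := FreeGroup.of 1
  let c : FreeGroup (Fin 3) := FreeGroup.of 2
  { (b * a) ^ 2 * b⁻¹ * c⁻¹ * b * a * b⁻¹ * c * b * ((b * a) ^ 2)⁻¹ *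
      c⁻¹ * b * a * b⁻¹ * c * b * ((b * a) ^ 2)⁻¹ * a * b * a * b⁻¹,
    c * (b * a) ^ 2 * b⁻¹ * c⁻¹ * b * a⁻¹ * b⁻¹ * c * b * a⁻¹ * b⁻¹ * a⁻¹ *
      c⁻¹ * a⁻¹ * b⁻¹ * a⁻¹ * b * a,
    c⁻¹ * (a⁻¹ * (⁅a, b⁆ * ⁅a⁻¹, b⁻¹⁆) ^ p * a) }

/-- The single relator of the presented group `K_p` on the two generators
`x, z` (encoded as `0, 1 : Fin 2`), where `y` abbreviates
`x⁻¹([x,z][x⁻¹,z⁻¹])^p x`. -/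
def relsK (p : ℤ) : Set (FreeGroup (Fin 2)) :=
  let x : FreeGroup (Fin 2) := FreeGroup.of 0
  let z : FreeGroup (Fin 2) := FreeGroup.of 1
  let y : FreeGroup (Fin 2) := x⁻¹ * (⁅x, z⁆ * ⁅x⁻¹, z⁻¹⁆) ^ p * x
  { ⁅x⁻¹, z⁻¹⁆ * x * y * x * (z * x * z⁻¹) * y⁻¹ *
      (y * z * x * (z * x * z⁻¹) * y⁻¹ * (z * x * z⁻¹)⁻¹)⁻¹ }

section Aux

variable {G : Type*} [Group G]

/-- value of the first relator of `H` at a triple of group elements -/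
def w1 (a b c : G) : G :=
  (b * a) ^ 2 * b⁻¹ * c⁻¹ * b * a * b⁻¹ * c * b * ((b * a) ^ 2)⁻¹ *
      c⁻¹ * b * a * b⁻¹ * c * b * ((b * a) ^ 2)⁻¹ * a * b * a * b⁻¹

/-- value of the second relator of `H` at a triple of group elements -/
def w2 (a b c : G) : G :=
  c * (b * a) ^ 2 * b⁻¹ * c⁻¹ * b * a⁻¹ * b⁻¹ * c * b * a⁻¹ * b⁻¹ * a⁻¹ *
      c⁻¹ * a⁻¹ * b⁻¹ * a⁻¹ * b * a

/-- value of the relator of `K` at a triple of group elements -/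
def wR (x z y : G) : G :=
  ⁅x⁻¹, z⁻¹⁆ * x * y * x * (z * x * z⁻¹) * y⁻¹ *
      (y * z * x * (z * x * z⁻¹) * y⁻¹ * (z * x * z⁻¹)⁻¹)⁻¹

/-- Free identity: the `K`-relator is the inverse of the second `H`-relator. -/
theorem wR_eq (a b c : G) : wR a b c = (w2 a b c)⁻¹ := by
  simp only [wR, w2, commutatorElement_def, pow_succ, pow_zero, one_mul, mul_inv_rev]
  group

/-- Free identity expressing the first `H`-relator, with `c = a⁻¹ Q a`, as a product of a
conjugate of the (inverse of the) second relator and a conjugate of the commutator of `Q`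
with `⁅a,b⁆⁅a⁻¹,b⁻¹⁆`. -/
theorem w1_eq (a b Q : G) :
    w1 a b (a⁻¹ * Q * a) =
      (b * a⁻¹ * Q⁻¹ * b⁻¹ * a⁻¹ * b * a) * (w2 a b (a⁻¹ * Q * a))⁻¹ *
        (b * a⁻¹ * Q⁻¹ * b⁻¹ * a⁻¹ * b * a)⁻¹ *
      ((b * a⁻¹ * b⁻¹ * a⁻¹ * b * a * b * a * b⁻¹ * a⁻¹ * Q⁻¹) *
        (Q * (⁅a, b⁆ * ⁅a⁻¹, b⁻¹⁆) * Q⁻¹ * (⁅a, b⁆ * ⁅a⁻¹, b⁻¹⁆)⁻¹) *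
        (b * a⁻¹ * b⁻¹ * a⁻¹ * b * a * b * a * b⁻¹ * a⁻¹ * Q⁻¹)⁻¹) := by
  simp only [w1, w2, commutatorElement_def, pow_succ, pow_zero, one_mul, mul_inv_rev]
  group

theorem mk_rel_eq_one {α : Type*} {rels : Set (FreeGroup α)} {r : FreeGroup α} (h : r ∈ rels) :
    PresentedGroup.mk rels r = 1 :=
  (QuotientGroup.eq_one_iff _).mpr (Subgroup.subset_normalClosure h)

end Aux

section Maps

variable (p : ℤ)

/-- images of the generators of `H` in `K` -/
def fphi : Fin 3 → PresentedGroup (relsK p) := fun i =>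
  if i = 0 then PresentedGroup.of 0
  else if i = 1 then PresentedGroup.of 1
  else (PresentedGroup.of 0)⁻¹ *
        (⁅(PresentedGroup.of 0 : PresentedGroup (relsK p)), PresentedGroup.of 1⁆ *
          ⁅(PresentedGroup.of 0 : PresentedGroup (relsK p))⁻¹, (PresentedGroup.of 1)⁻¹⁆) ^ p *
        PresentedGroup.of 0

/-- images of the generators of `K` in `H` -/
def fpsi : Fin 2 → PresentedGroup (relsH p) := fun i =>
  if i = 0 then PresentedGroup.of 0 else PresentedGroup.of 1

@[simp] theorem fphi_zero : fphi p 0 = PresentedGroup.of 0 := rfl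
@[simp] theorem fphi_one : fphi p 1 = PresentedGroup.of 1 := rfl
@[simp] theorem fphi_two : fphi p 2 =
    (PresentedGroup.of 0)⁻¹ *
      (⁅(PresentedGroup.of 0 : PresentedGroup (relsK p)), PresentedGroup.of 1⁆ *
        ⁅(PresentedGroup.of 0 : PresentedGroup (relsK p))⁻¹, (PresentedGroup.of 1)⁻¹⁆) ^ p *
      PresentedGroup.of 0 := rfl
@[simp] theorem fpsi_zero : fpsi p 0 = PresentedGroup.of 0 := rfl
@[simp] theorem fpsi_one : fpsi p 1 = PresentedGroup.of 1 := rfl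

/-- The `K`-relator holds in `K`. -/
theorem hK :
    wR (PresentedGroup.of 0 : PresentedGroup (relsK p)) (PresentedGroup.of 1)
      ((PresentedGroup.of 0)⁻¹ *
        (⁅(PresentedGroup.of 0 : PresentedGroup (relsK p)), PresentedGroup.of 1⁆ *
          ⁅(PresentedGroup.of 0 : PresentedGroup (relsK p))⁻¹, (PresentedGroup.of 1)⁻¹⁆) ^ p *
        PresentedGroup.of 0) = 1 := by
  have hmem : (⁅(FreeGroup.of 0 : FreeGroup (Fin 2))⁻¹, (FreeGroup.of 1)⁻¹⁆ *
      FreeGroup.of 0 *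
      ((FreeGroup.of 0)⁻¹ * (⁅(FreeGroup.of 0 : FreeGroup (Fin 2)), FreeGroup.of 1⁆ *
        ⁅(FreeGroup.of 0 : FreeGroup (Fin 2))⁻¹, (FreeGroup.of 1)⁻¹⁆) ^ p * FreeGroup.of 0) *
      FreeGroup.of 0 *
      (FreeGroup.of 1 * FreeGroup.of 0 * (FreeGroup.of 1)⁻¹) *
      ((FreeGroup.of 0)⁻¹ * (⁅(FreeGroup.of 0 : FreeGroup (Fin 2)), FreeGroup.of 1⁆ *
        ⁅(FreeGroup.of 0 : FreeGroup (Fin 2))⁻¹, (FreeGroup.of 1)⁻¹⁆) ^ p * FreeGroup.of 0)⁻¹ *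
      (((FreeGroup.of 0)⁻¹ * (⁅(FreeGroup.of 0 : FreeGroup (Fin 2)), FreeGroup.of 1⁆ *
          ⁅(FreeGroup.of 0 : FreeGroup (Fin 2))⁻¹, (FreeGroup.of 1)⁻¹⁆) ^ p * FreeGroup.of 0) *
        FreeGroup.of 1 * FreeGroup.of 0 *
        (FreeGroup.of 1 * FreeGroup.of 0 * (FreeGroup.of 1)⁻¹) *
        ((FreeGroup.of 0)⁻¹ * (⁅(FreeGroup.of 0 : FreeGroup (Fin 2)), FreeGroup.of 1⁆ *
          ⁅(FreeGroup.of 0 : FreeGroup (Fin 2))⁻¹, (FreeGroup.of 1)⁻¹⁆) ^ p * FreeGroup.of 0)⁻¹ *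
        (FreeGroup.of 1 * FreeGroup.of 0 * (FreeGroup.of 1)⁻¹)⁻¹)⁻¹) ∈ relsK p := by
    rw [relsK]; exact Set.mem_singleton _
  have h := mk_rel_eq_one hmem
  simp only [map_mul, map_inv, map_zpow, map_commutatorElement] at h
  exact h

end Maps

theorem hom_is_well_defined_and_isomorphism (p : ℤ) :
    ∃ φ : PresentedGroup (relsH p) →* PresentedGroup (relsK p),
      φ (PresentedGroup.of 0) = PresentedGroup.of 0 ∧
      φ (PresentedGroup.of 1) = PresentedGroup.of 1 ∧
      φ (PresentedGroup.of 2) =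
        (PresentedGroup.of 0)⁻¹ *
          (⁅(PresentedGroup.of 0 : PresentedGroup (relsK p)), PresentedGroup.of 1⁆ *
            ⁅(PresentedGroup.of 0 : PresentedGroup (relsK p))⁻¹, (PresentedGroup.of 1)⁻¹⁆) ^ p *
          PresentedGroup.of 0 ∧
      Function.Bijective φ := by
  classical
  -- Notation in K
  set X : PresentedGroup (relsK p) := PresentedGroup.of 0 with hXdef
  set Z : PresentedGroup (relsK p) := PresentedGroup.of 1 with hZdef
  set Y : PresentedGroup (relsK p) := X⁻¹ * (⁅X, Z⁆ * ⁅X⁻¹, Z⁻¹⁆) ^ p * X with hYdef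
  -- Notation in H
  set A : PresentedGroup (relsH p) := PresentedGroup.of 0 with hAdef
  set B : PresentedGroup (relsH p) := PresentedGroup.of 1 with hBdef
  set Cc : PresentedGroup (relsH p) := PresentedGroup.of 2 with hCdef
  -- The K relator holds in K
  have hKrel : wR X Z Y = 1 := hK p
  have hw2K : w2 X Z Y = 1 := inv_eq_one.mp ((wR_eq X Z Y).symm.trans hKrel)
  have hw1K : w1 X Z Y = 1 := by
    rw [hYdef, w1_eq X Z ((⁅X, Z⁆ * ⁅X⁻¹, Z⁻¹⁆) ^ p), ← hYdef, hw2K]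
    have hc : (⁅X, Z⁆ * ⁅X⁻¹, Z⁻¹⁆) ^ p * (⁅X, Z⁆ * ⁅X⁻¹, Z⁻¹⁆) *
        ((⁅X, Z⁆ * ⁅X⁻¹, Z⁻¹⁆) ^ p)⁻¹ * (⁅X, Z⁆ * ⁅X⁻¹, Z⁻¹⁆)⁻¹ = 1 := by
      rw [((Commute.refl (⁅X, Z⁆ * ⁅X⁻¹, Z⁻¹⁆)).zpow_left p).eq]
      group
    rw [hc]
    group
  -- relators of H in H
  have h2H : w2 A B Cc = 1 := by
    have hmem : ((FreeGroup.of 2 : FreeGroup (Fin 3)) *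
        (FreeGroup.of 1 * FreeGroup.of 0) ^ 2 * (FreeGroup.of 1)⁻¹ * (FreeGroup.of 2)⁻¹ *
        FreeGroup.of 1 * (FreeGroup.of 0)⁻¹ * (FreeGroup.of 1)⁻¹ * FreeGroup.of 2 *
        FreeGroup.of 1 * (FreeGroup.of 0)⁻¹ * (FreeGroup.of 1)⁻¹ * (FreeGroup.of 0)⁻¹ *
        (FreeGroup.of 2)⁻¹ * (FreeGroup.of 0)⁻¹ * (FreeGroup.of 1)⁻¹ * (FreeGroup.of 0)⁻¹ *
        FreeGroup.of 1 * FreeGroup.of 0) ∈ relsH p := by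
      rw [relsH]; exact Set.mem_insert_iff.mpr (Or.inr (Set.mem_insert _ _))
    have h := mk_rel_eq_one hmem
    simp only [map_mul, map_inv, map_pow] at h
    exact h
  have h3H : A⁻¹ * (⁅A, B⁆ * ⁅A⁻¹, B⁻¹⁆) ^ p * A = Cc := by
    have hmem : ((FreeGroup.of 2 : FreeGroup (Fin 3))⁻¹ *
        ((FreeGroup.of 0)⁻¹ * (⁅(FreeGroup.of 0 : FreeGroup (Fin 3)), FreeGroup.of 1⁆ *
          ⁅(FreeGroup.of 0 : FreeGroup (Fin 3))⁻¹, (FreeGroup.of 1)⁻¹⁆) ^ p * FreeGroup.of 0))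
        ∈ relsH p := by
      rw [relsH]
      exact Set.mem_insert_iff.mpr (Or.inr (Set.mem_insert_iff.mpr (Or.inr rfl)))
    have h := mk_rel_eq_one hmem
    simp only [map_mul, map_inv, map_zpow, map_commutatorElement] at h
    exact (inv_mul_eq_one.mp h).symm
  -- φ : H →* K
  have hrelsφ : ∀ r ∈ relsH p, FreeGroup.lift (fphi p) r = 1 := by
    intro r hr
    rw [relsH] at hr
    rcases hr with h | h | h <;> subst h <;>
      simp only [map_mul, map_inv, map_pow, map_zpow, map_commutatorElement,
        FreeGroup.lift_apply_of, fphi_zero, fphi_one, fphi_two, ← hXdef, ← hZdef, ← hYdef]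
    · exact hw1K
    · exact hw2K
    · group
  -- ψ : K →* H
  have hrelsψ : ∀ r ∈ relsK p, FreeGroup.lift (fpsi p) r = 1 := by
    intro r hr
    rw [relsK, Set.mem_singleton_iff] at hr
    subst hr
    simp only [map_mul, map_inv, map_zpow, map_commutatorElement,
      FreeGroup.lift_apply_of, fpsi_zero, fpsi_one, ← hAdef, ← hBdef]
    rw [h3H]
    exact (wR_eq A B Cc).trans (by rw [h2H]; group)
  refine ⟨PresentedGroup.toGroup hrelsφ, PresentedGroup.toGroup.of hrelsφ,
    PresentedGroup.toGroup.of hrelsφ, PresentedGroup.toGroup.of hrelsφ, ?_⟩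
  -- bijectivity via the inverse homomorphism
  have hcomp1 : ∀ x : PresentedGroup (relsK p),
      (PresentedGroup.toGroup hrelsφ) ((PresentedGroup.toGroup hrelsψ) x) = x := by
    have : (PresentedGroup.toGroup hrelsφ).comp (PresentedGroup.toGroup hrelsψ) =
        MonoidHom.id _ := by
      apply PresentedGroup.ext
      intro i
      fin_cases i <;>
        simp only [MonoidHom.comp_apply, MonoidHom.id_apply, PresentedGroup.toGroup.of] <;>
        rfl
    intro x
    exact DFunLike.congr_fun this x
  have hcomp2 : ∀ x : PresentedGroup (relsH p),
      (PresentedGroup.toGroup hrelsψ) ((PresentedGroup.toGroup hrelsφ) x) = x := by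
    have : (PresentedGroup.toGroup hrelsψ).comp (PresentedGroup.toGroup hrelsφ) =
        MonoidHom.id _ := by
      apply PresentedGroup.ext
      intro i
      fin_cases i
      · simp only [MonoidHom.comp_apply, MonoidHom.id_apply, PresentedGroup.toGroup.of]; rfl
      · simp only [MonoidHom.comp_apply, MonoidHom.id_apply, PresentedGroup.toGroup.of]; rfl
      · show (PresentedGroup.toGroup hrelsψ) ((PresentedGroup.toGroup hrelsφ)
            (PresentedGroup.of 2)) = PresentedGroup.of 2
        rw [PresentedGroup.toGroup.of, fphi_two]
        simp only [map_mul, map_inv, map_zpow, map_commutatorElement,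
          PresentedGroup.toGroup.of, fpsi_zero, fpsi_one]
        rw [← hAdef, ← hBdef]
        exact h3H
    intro x
    exact DFunLike.congr_fun this x
  exact Function.bijective_iff_has_inverse.mpr
    ⟨PresentedGroup.toGroup hrelsψ, hcomp2, hcomp1⟩

end Stmt14
end
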